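/- arXiv:math/0304355 — 2 statements merged into one kernel-verified Lean document; each statement's English description precedes it below -/
import Mathlib

section
/- Let Π : T → B(𝓗) be a map into the bounded operators on a Hilbert space 𝓗 satisfying Π(st) = Π(s)Π(t) and Π(s*) = Π(s)* for all s, t ∈ T, Π(z) = 0, and Π(v,v) = Σ_{e : s(e)=v} Π(e,e) for every v ∈ V_f. Then setting P_v = Π(v,v) (v ∈ V) and S_e = Π(e, r(e)) (e ∈ Ed) defines a representation of E on 𝓗; in particular the P_v are mutually orthogonal projections, the S_eS_e* are mutually orthogonal projections, S_e*S_e = P_{r(e)}, P_v = Σ_{s(e)=v} S_eS_e* for v ∈ V_f, and P_{s(e)}S_eS_e* = S_eS_e*. -/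
namespace GraphCstar

/-- A directed graph: vertices, edges, source and range maps. -/
structure Graph where
  V : Type
  Ed : Type
  src : Ed → V
  rng : Ed → V

variable (G : Graph)

/-- Validity of a list of edges as a path starting at vertex `v`. -/
def Valid : G.V → List G.Ed → Prop
  | _, [] => True
  | v, e :: l => G.src e = v ∧ Valid (G.rng e) l

/-- Terminal vertex of a list of edges starting at `v`. -/
def rngTo : G.V → List G.Ed → G.V
  | v, [] => v
  | _, e :: l => rngTo (G.rng e) l

theorem valid_append (l₁ l₂ : List G.Ed) (v : G.V) :
    Valid G v (l₁ ++ l₂) ↔ Valid G v l₁ ∧ Valid G (rngTo G v l₁) l₂ := by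
  induction l₁ generalizing v with
  | nil => simp [Valid, rngTo]
  | cons e l ih => simp [Valid, rngTo, ih, and_assoc]

theorem rngTo_append (l₁ l₂ : List G.Ed) (v : G.V) :
    rngTo G v (l₁ ++ l₂) = rngTo G (rngTo G v l₁) l₂ := by
  induction l₁ generalizing v with
  | nil => rfl
  | cons e l ih => simp [rngTo, ih]

theorem valid_drop {v : G.V} {l : List G.Ed} (n : ℕ) (h : Valid G v l) :
    Valid G (rngTo G v (l.take n)) (l.drop n) := by
  have h' : Valid G v (l.take n ++ l.drop n) := by
    rw [List.take_append_drop]; exact h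
  exact ((valid_append G _ _ _).mp h').2

/-- A finite path in the graph `G`; vertices are the paths of length `0`. -/
structure FinPath where
  start : G.V
  edges : List G.Ed
  valid : Valid G start edges

namespace FinPath

variable {G}

/-- The terminal vertex (range) of a finite path. -/
def rngF (α : FinPath G) : G.V := rngTo G α.start α.edges

/-- The length of a finite path. -/
def len (α : FinPath G) : ℕ := α.edges.length

/-- The finite path of length `0` at the vertex `v`. -/
def vp (v : G.V) : FinPath G := ⟨v, [], trivial⟩

/-- The finite path consisting of the single edge `e`. -/
def ep (e : G.Ed) : FinPath G := ⟨G.src e, [e], ⟨rfl, trivial⟩⟩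

/-- Concatenation of finite paths. -/
def concat (α β : FinPath G) (h : β.start = α.rngF) : FinPath G :=
  ⟨α.start, α.edges ++ β.edges,
    (valid_append G _ _ _).mpr
      ⟨α.valid, by
        show Valid G α.rngF β.edges
        rw [← h]; exact β.valid⟩⟩

theorem rngF_concat (α β : FinPath G) (h : β.start = α.rngF) :
    (α.concat β h).rngF = β.rngF := by
  show rngTo G α.start (α.edges ++ β.edges) = _
  rw [rngTo_append]
  show rngTo G α.rngF β.edges = _
  rw [← h]; rfl

end FinPath

/-- `α` is an initial segment of `β`. -/
def IsPref (α β : FinPath G) : Prop := α.start = β.start ∧ α.edges <+: β.edges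

/-- The "remainder" path: if `α` is an initial segment of `β`, the path `μ` with
`β = αμ` (for other inputs the value is junk). -/
def diff (α β : FinPath G) : FinPath G :=
  ⟨rngTo G β.start (β.edges.take α.edges.length),
    β.edges.drop α.edges.length, valid_drop G _ β.valid⟩

open Classical in
/-- Totalized concatenation of finite paths (junk value when endpoints do not match). -/
noncomputable def catP (α β : FinPath G) : FinPath G :=
  if h : β.start = α.rngF then α.concat β h else α

open Classical in
/-- The product on `T = {(α,β) ∈ Y × Y : r(α) = r(β)} ∪ {z}`, with `z` encoded as `none`. -/
noncomputable def mulT :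
    Option (FinPath G × FinPath G) → Option (FinPath G × FinPath G) →
      Option (FinPath G × FinPath G)
  | none, _ => none
  | _, none => none
  | some (α₁, β₁), some (α₂, β₂) =>
    if IsPref G β₁ α₂ then some (catP G α₁ (diff G β₁ α₂), β₂)
    else if IsPref G α₂ β₁ then some (α₁, catP G β₂ (diff G α₂ β₁))
    else none

/-- The involution on `T`. -/
def starT :
    Option (FinPath G × FinPath G) → Option (FinPath G × FinPath G)
  | none => none
  | some (α, β) => some (β, α)

/-- The subset of `Option (FinPath G × FinPath G)` corresponding to
`T = {(α,β) : r(α) = r(β)} ∪ {z}`. -/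
def TsetT : Set (Option (FinPath G × FinPath G)) :=
  {t | ∀ α β : FinPath G, t = some (α, β) → α.rngF = β.rngF}

/-- An infinite path in the graph `G`. -/
structure InfPath where
  seq : ℕ → G.Ed
  valid : ∀ i, G.src (seq (i + 1)) = G.rng (seq i)

/-- The initial vertex of an infinite path. -/
def InfPath.start {G : Graph} (z : InfPath G) : G.V := G.src (z.seq 0)

/-- Prepending an edge to an infinite path. -/
def consInf (e : G.Ed) (z : InfPath G) (h : z.start = G.rng e) : InfPath G where
  seq := fun n =>
    match n with
    | 0 => e
    | m + 1 => z.seq m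
  valid := fun i =>
    match i with
    | 0 => h
    | m + 1 => z.valid m

/-- Prepending a finite edge list to an infinite path (with the starting vertex recorded). -/
def appendInfAux :
    (l : List G.Ed) → (v : G.V) → Valid G v l → (z : InfPath G) →
      z.start = rngTo G v l → {w : InfPath G // w.start = v}
  | [], _, _, z, h => ⟨z, h⟩
  | e :: l, v, hv, z, h =>
    let w := appendInfAux l (G.rng e) hv.2 z h
    ⟨consInf G e w.1 w.2, hv.1⟩

/-- Concatenation of a finite path with an infinite path. -/
def FinPath.concatInf {G : Graph} (α : FinPath G) (z : InfPath G)
    (h : z.start = α.rngF) : InfPath G :=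
  (appendInfAux G α.edges α.start α.valid z h).1

/-- The path space `Y ∪ Z` of all finite and infinite paths. -/
def PathSp := FinPath G ⊕ InfPath G

/-- The initial vertex of a (finite or infinite) path. -/
def startOf : PathSp G → G.V
  | .inl α => α.start
  | .inr z => z.start

/-- The length of a path, in `ℕ∞`. -/
def lenOf : PathSp G → ℕ∞
  | .inl α => (α.edges.length : ℕ∞)
  | .inr _ => ⊤

/-- The `i`-th edge (0-indexed) of a path, if it exists. -/
def nthEdge : PathSp G → ℕ → Option G.Ed
  | .inl α, i => α.edges[i]?
  | .inr z, i => some (z.seq i)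

/-- `x = αγ` for some (finite or infinite, possibly length `0`) path `γ`;
that is, `α` is an initial segment of `x`, i.e. `x ∈ D_α`. -/
def Ext (α : FinPath G) (x : PathSp G) : Prop :=
  (∃ (β : FinPath G) (h : β.start = α.rngF), x = .inl (α.concat β h)) ∨
  (∃ (w : InfPath G) (h : w.start = α.rngF), x = .inr (α.concatInf w h))

/-- The basic set `D_α ⊆ Y ∪ Z`. -/
def Dset (α : FinPath G) : Set (PathSp G) := {x | Ext G α x}

/-- The topology on the path space, generated by the sets `D_α` and their complements. -/
def pathTop : TopologicalSpace (PathSp G) :=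
  .generateFrom (Set.range (Dset G) ∪ Set.range fun α => (Dset G α)ᶜ)

/-- The vertex `v` emits infinitely many edges. -/
def Vinf (v : G.V) : Prop := {e | G.src e = v}.Infinite

/-- Membership in `X = Y_∞ ∪ Z`. -/
def memX : PathSp G → Prop
  | .inl α => Vinf G α.rngF
  | .inr _ => True

/-- The set `X = Y_∞ ∪ Z`. -/
def Xset : Set (PathSp G) := {x | memX G x}

/-- Tail equivalence of paths: `x = αγ` and `y = βγ` for finite paths `α, β`
and a common (finite or infinite) path `γ`. -/
def TailEq (x y : PathSp G) : Prop :=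
  (∃ (α β γ : FinPath G) (h₁ : γ.start = α.rngF) (h₂ : γ.start = β.rngF),
      x = .inl (α.concat γ h₁) ∧ y = .inl (β.concat γ h₂)) ∨
  (∃ (α β : FinPath G) (w : InfPath G) (h₁ : w.start = α.rngF)
      (h₂ : w.start = β.rngF),
      x = .inr (α.concatInf w h₁) ∧ y = .inr (β.concatInf w h₂))

/-- A subset of the path space is invariant (a union of tail-equivalence classes). -/
def InvariantS (F : Set (PathSp G)) : Prop :=
  ∀ x ∈ F, ∀ y, TailEq G x y → y ∈ F

/-- Membership `(x, k, y) ∈ G` for the path groupoid: `x = αγ`, `y = βγ` and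
`k = l(α) - l(β)`. -/
def InG (x : PathSp G) (k : ℤ) (y : PathSp G) : Prop :=
  (∃ (α β γ : FinPath G) (h₁ : γ.start = α.rngF) (h₂ : γ.start = β.rngF),
      x = .inl (α.concat γ h₁) ∧ y = .inl (β.concat γ h₂) ∧
        k = (α.len : ℤ) - (β.len : ℤ)) ∨
  (∃ (α β : FinPath G) (w : InfPath G) (h₁ : w.start = α.rngF)
      (h₂ : w.start = β.rngF),
      x = .inr (α.concatInf w h₁) ∧ y = .inr (β.concatInf w h₂) ∧
        k = (α.len : ℤ) - (β.len : ℤ))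

/-- There is a finite path from `u` to `w`. -/
def Reach (u w : G.V) : Prop := ∃ β : FinPath G, β.start = u ∧ β.rngF = w

/-- A loop based at the vertex `v`. -/
def LoopAt (v : G.V) (α : FinPath G) : Prop :=
  α.edges ≠ [] ∧ α.start = v ∧ α.rngF = v ∧
    ∀ i e, i + 1 < α.edges.length → α.edges[i]? = some e → G.rng e ≠ v

/-- Condition (K): no vertex has exactly one loop based at it. -/
def CondK : Prop := ¬ ∃ v : G.V, ∃! α : FinPath G, LoopAt G v α

/-- A point of the path space has trivial isotropy if whenever `x = αγ = βγ`
then `l(α) = l(β)`. -/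
def TrivIso (x : PathSp G) : Prop :=
  ∀ α β : FinPath G,
    ((∃ (γ : FinPath G) (h₁ : γ.start = α.rngF) (h₂ : γ.start = β.rngF),
        x = .inl (α.concat γ h₁) ∧ x = .inl (β.concat γ h₂)) ∨
     (∃ (w : InfPath G) (h₁ : w.start = α.rngF) (h₂ : w.start = β.rngF),
        x = .inr (α.concatInf w h₁) ∧ x = .inr (β.concatInf w h₂))) →
    α.len = β.len


variable (𝓗 : Type) [NormedAddCommGroup 𝓗] [InnerProductSpace ℂ 𝓗] [CompleteSpace 𝓗]

variable {G 𝓗}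

/-- `P_v = Π(v,v)`. -/
def PvOf (Pi : Option (FinPath G × FinPath G) → 𝓗 →L[ℂ] 𝓗) (v : G.V) : 𝓗 →L[ℂ] 𝓗 :=
  Pi (some (FinPath.vp v, FinPath.vp v))

/-- `S_e = Π(e, r(e))`. -/
def SeOf (Pi : Option (FinPath G × FinPath G) → 𝓗 →L[ℂ] 𝓗) (e : G.Ed) : 𝓗 →L[ℂ] 𝓗 :=
  Pi (some (FinPath.ep e, FinPath.vp (G.rng e)))

/-- `S_e S_e*`. -/
noncomputable def SSeOf (Pi : Option (FinPath G × FinPath G) → 𝓗 →L[ℂ] 𝓗) (e : G.Ed) :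
    𝓗 →L[ℂ] 𝓗 :=
  SeOf Pi e * ContinuousLinearMap.adjoint (SeOf Pi e)

theorem FinPath.ext' {G : Graph} {α β : FinPath G} (h1 : α.start = β.start)
    (h2 : α.edges = β.edges) : α = β := by
  cases α; cases β; simp_all

theorem mem_TsetT {G : Graph} (α β : FinPath G) (h : α.rngF = β.rngF) :
    some (α, β) ∈ TsetT G := by
  intro α' β' he
  injection he with h1
  injection h1 with ha hb
  subst ha; subst hb; exact h

theorem isPref_refl {G : Graph} (α : FinPath G) : IsPref G α α :=
  ⟨rfl, List.prefix_refl _⟩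

theorem diff_self {G : Graph} (α : FinPath G) : diff G α α = FinPath.vp α.rngF := by
  apply FinPath.ext'
  · show rngTo G α.start (α.edges.take α.edges.length) = α.rngF
    rw [List.take_length]; rfl
  · show α.edges.drop α.edges.length = []
    simp

theorem catP_vp {G : Graph} (α : FinPath G) : catP G α (FinPath.vp α.rngF) = α := by
  unfold catP
  rw [dif_pos (show (FinPath.vp α.rngF).start = α.rngF from rfl)]
  apply FinPath.ext'
  · rfl
  · show α.edges ++ [] = α.edges
    simp

open Classical in
theorem mulT_some {G : Graph} (α₁ β₁ α₂ β₂ : FinPath G) :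
    mulT G (some (α₁, β₁)) (some (α₂, β₂)) =
    if IsPref G β₁ α₂ then some (catP G α₁ (diff G β₁ α₂), β₂)
    else if IsPref G α₂ β₁ then some (α₁, catP G β₂ (diff G α₂ β₁))
    else none := rfl

theorem mulT_mid {G : Graph} (α γ β : FinPath G) (h : γ.rngF = α.rngF) :
    mulT G (some (α, γ)) (some (γ, β)) = some (α, β) := by
  rw [mulT_some, if_pos (isPref_refl γ), diff_self, h, catP_vp]

theorem mulT_vp_ne {G : Graph} (v w : G.V) (h : v ≠ w) :
    mulT G (some (FinPath.vp v, FinPath.vp v)) (some (FinPath.vp w, FinPath.vp w)) =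
      none := by
  rw [mulT_some, if_neg (fun hp : IsPref G _ _ => h hp.1),
    if_neg (fun hp : IsPref G _ _ => h hp.1.symm)]

theorem mulT_ep_ne {G : Graph} (e f : G.Ed) (h : e ≠ f) :
    mulT G (some (FinPath.ep e, FinPath.ep e)) (some (FinPath.ep f, FinPath.ep f)) =
      none := by
  rw [mulT_some, if_neg, if_neg]
  · rintro ⟨_, t, ht⟩
    injection ht with h1 _
    exact h h1.symm
  · rintro ⟨_, t, ht⟩
    injection ht with h1 _
    exact h h1

theorem mulT_vp_src {G : Graph} (e : G.Ed) :
    mulT G (some (FinPath.vp (G.src e), FinPath.vp (G.src e)))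
        (some (FinPath.ep e, FinPath.ep e)) = some (FinPath.ep e, FinPath.ep e) := by
  rw [mulT_some, if_pos ⟨rfl, List.nil_prefix⟩]
  have hd : diff G (FinPath.vp (G.src e)) (FinPath.ep e) = FinPath.ep e := by
    apply FinPath.ext' rfl rfl
  rw [hd]
  have hc : catP G (FinPath.vp (G.src e)) (FinPath.ep e) = FinPath.ep e := by
    unfold catP
    rw [dif_pos (show (FinPath.ep e).start = (FinPath.vp (G.src e)).rngF from rfl)]
    apply FinPath.ext' rfl rfl
  rw [hc]

/-- If `Π : T → B(𝓗)` is multiplicative and `*`-preserving, `Π(z) = 0`,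
and `Π(v,v) = Σ_{s(e)=v} Π(e,e)` for every `v ∈ V_f`, then `P_v = Π(v,v)` and
`S_e = Π(e, r(e))` define a representation of the graph `E` on `𝓗`: the `P_v` are
mutually orthogonal projections, the `S_e S_e*` are mutually orthogonal projections,
`S_e* S_e = P_{r(e)}`, `P_v = Σ_{s(e)=v} S_e S_e*` for `v ∈ V_f`, and
`P_{s(e)} S_e S_e* = S_e S_e*`. -/
theorem rep_of_semigroup_rep (G : Graph) [Countable G.V] [Countable G.Ed]
    (𝓗 : Type) [NormedAddCommGroup 𝓗] [InnerProductSpace ℂ 𝓗] [CompleteSpace 𝓗]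
    (Pi : Option (FinPath G × FinPath G) → 𝓗 →L[ℂ] 𝓗)
    (hmul : ∀ s ∈ TsetT G, ∀ t ∈ TsetT G, Pi (mulT G s t) = Pi s * Pi t)
    (hstar : ∀ s ∈ TsetT G, Pi (starT G s) = ContinuousLinearMap.adjoint (Pi s))
    (hz : Pi none = 0)
    (hsum : ∀ (v : G.V) (h : {e : G.Ed | G.src e = v}.Finite),
      Pi (some (FinPath.vp v, FinPath.vp v)) =
        ∑ e ∈ h.toFinset, Pi (some (FinPath.ep e, FinPath.ep e))) :
    (∀ v : G.V, ContinuousLinearMap.adjoint (PvOf Pi v) = PvOf Pi v ∧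
      PvOf Pi v * PvOf Pi v = PvOf Pi v) ∧
    (∀ v w : G.V, v ≠ w → PvOf Pi v * PvOf Pi w = 0) ∧
    (∀ e : G.Ed, ContinuousLinearMap.adjoint (SSeOf Pi e) = SSeOf Pi e ∧
      SSeOf Pi e * SSeOf Pi e = SSeOf Pi e) ∧
    (∀ e f : G.Ed, e ≠ f → SSeOf Pi e * SSeOf Pi f = 0) ∧
    (∀ e : G.Ed, ContinuousLinearMap.adjoint (SeOf Pi e) * SeOf Pi e = PvOf Pi (G.rng e)) ∧
    (∀ (v : G.V) (h : {e : G.Ed | G.src e = v}.Finite),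
      PvOf Pi v = ∑ e ∈ h.toFinset, SSeOf Pi e) ∧
    (∀ e : G.Ed, PvOf Pi (G.src e) * SSeOf Pi e = SSeOf Pi e) := by
  have memvv : ∀ v : G.V, some (FinPath.vp v, FinPath.vp v) ∈ TsetT G :=
    fun v => mem_TsetT _ _ rfl
  have memee : ∀ e : G.Ed, some (FinPath.ep e, FinPath.ep e) ∈ TsetT G :=
    fun e => mem_TsetT _ _ rfl
  have memev : ∀ e : G.Ed,
      some (FinPath.ep e, FinPath.vp (G.rng e)) ∈ TsetT G :=
    fun e => mem_TsetT _ _ rfl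
  have memve : ∀ e : G.Ed,
      some (FinPath.vp (G.rng e), FinPath.ep e) ∈ TsetT G :=
    fun e => mem_TsetT _ _ rfl
  have hadjS : ∀ e : G.Ed, ContinuousLinearMap.adjoint (SeOf Pi e) =
      Pi (some (FinPath.vp (G.rng e), FinPath.ep e)) :=
    fun e => (hstar _ (memev e)).symm
  have hSS : ∀ e : G.Ed, SSeOf Pi e = Pi (some (FinPath.ep e, FinPath.ep e)) := by
    intro e
    show SeOf Pi e * ContinuousLinearMap.adjoint (SeOf Pi e) = _
    rw [hadjS e]
    show Pi (some (FinPath.ep e, FinPath.vp (G.rng e))) * _ = _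
    rw [← hmul _ (memev e) _ (memve e), mulT_mid (FinPath.ep e) (FinPath.vp (G.rng e)) (FinPath.ep e) rfl]
  refine ⟨?_, ?_, ?_, ?_, ?_, ?_, ?_⟩
  · intro v
    constructor
    · exact (hstar _ (memvv v)).symm
    · show Pi _ * Pi _ = _
      rw [← hmul _ (memvv v) _ (memvv v),
        mulT_mid (FinPath.vp v) (FinPath.vp v) (FinPath.vp v) rfl]
      rfl
  · intro v w hvw
    show Pi _ * Pi _ = _
    rw [← hmul _ (memvv v) _ (memvv w), mulT_vp_ne v w hvw, hz]
  · intro e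
    constructor
    · rw [hSS e]
      exact (hstar _ (memee e)).symm
    · rw [hSS e]
      rw [← hmul _ (memee e) _ (memee e),
        mulT_mid (FinPath.ep e) (FinPath.ep e) (FinPath.ep e) rfl]
  · intro e f hef
    rw [hSS e, hSS f, ← hmul _ (memee e) _ (memee f), mulT_ep_ne e f hef, hz]
  · intro e
    rw [hadjS e]
    show _ * Pi _ = _
    rw [← hmul _ (memve e) _ (memev e),
      mulT_mid (FinPath.vp (G.rng e)) (FinPath.ep e) (FinPath.vp (G.rng e)) rfl]
    rfl
  · intro v h
    calc PvOf Pi v = ∑ e ∈ h.toFinset, Pi (some (FinPath.ep e, FinPath.ep e)) :=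
          hsum v h
      _ = ∑ e ∈ h.toFinset, SSeOf Pi e := by
          exact Finset.sum_congr rfl fun e _ => (hSS e).symm
  · intro e
    rw [hSS e]
    show Pi _ * Pi _ = _
    rw [← hmul _ (memvv (G.src e)) _ (memee e), mulT_vp_src e]

end GraphCstar
end

section
/- The following are equivalent: (1) E satisfies condition (K), i.e. no vertex has exactly one loop based at it; (2) for every subset F of X that is closed in the subspace topology of X and invariant under tail equivalence, the set of points of F with trivial isotropy is dense in F. -/
namespace GraphCstar

variable (G : Graph)

/-! ### Infrastructure -/

section Infra

variable {G}

theorem fpext {α β : FinPath G} (h1 : α.start = β.start) (h2 : α.edges = β.edges) :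
    α = β := by
  cases α; cases β; simp_all

theorem ipext {z w : InfPath G} (h : ∀ i, z.seq i = w.seq i) : z = w := by
  cases z; cases w; simp only [InfPath.mk.injEq]; funext i; exact h i

theorem valid_chain {v : G.V} {l : List G.Ed} (hv : Valid G v l) :
    ∀ i, (h : i + 1 < l.length) → G.src (l[i + 1]) = G.rng (l[i]'(Nat.lt_of_succ_lt h)) := by
  induction l generalizing v with
  | nil => intro i h; simp at h
  | cons e t ih =>
    intro i h
    cases i with
    | zero =>
      cases t with
      | nil => simp at h
      | cons e' t' => exact hv.2.1
    | succ j =>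
      have := ih hv.2 j (by simpa using h)
      simpa using this

theorem valid_head {v : G.V} {l : List G.Ed} (hv : Valid G v l) (h : 0 < l.length) :
    G.src (l[0]) = v := by
  cases l with
  | nil => simp at h
  | cons e t => exact hv.1

theorem rngTo_take_succ {v : G.V} {l : List G.Ed} (i : ℕ) (h : i < l.length) :
    rngTo G v (l.take (i + 1)) = G.rng (l[i]) := by
  induction l generalizing v i with
  | nil => simp at h
  | cons e t ih =>
    cases i with
    | zero => cases t <;> simp [rngTo]
    | succ j =>
      have := ih (v := G.rng e) j (by simpa using h)
      simpa [rngTo] using this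

theorem src_getElem {v : G.V} {l : List G.Ed} (hv : Valid G v l) (i : ℕ)
    (h : i < l.length) : G.src (l[i]) = rngTo G v (l.take i) := by
  cases i with
  | zero => simpa [rngTo] using valid_head hv h
  | succ j =>
    rw [valid_chain hv j h, rngTo_take_succ j (Nat.lt_of_succ_lt h)]

theorem appendInfAux_seq (l : List G.Ed) (v : G.V) (hv : Valid G v l)
    (z : InfPath G) (h : z.start = rngTo G v l) (i : ℕ) :
    (appendInfAux G l v hv z h).1.seq i =
      if hi : i < l.length then l[i] else z.seq (i - l.length) := by
  induction l generalizing v i with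
  | nil => simp [appendInfAux]
  | cons e t ih =>
    cases i with
    | zero => simp [appendInfAux, consInf]
    | succ j =>
      have := ih (G.rng e) hv.2 h j
      simp only [appendInfAux, consInf]
      rw [this]
      by_cases hj : j < t.length
      · simp [hj, Nat.succ_lt_succ hj]
      · have : ¬ j + 1 < t.length + 1 := by omega
        simp [hj, this, List.length_cons]

theorem concatInf_seq (α : FinPath G) (z : InfPath G) (h : z.start = α.rngF) (i : ℕ) :
    (α.concatInf z h).seq i =
      if hi : i < α.edges.length then α.edges[i] else z.seq (i - α.edges.length) :=
  appendInfAux_seq α.edges α.start α.valid z h i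

theorem concatInf_start (α : FinPath G) (z : InfPath G) (h : z.start = α.rngF) :
    (α.concatInf z h).start = α.start :=
  (appendInfAux G α.edges α.start α.valid z h).2

theorem infPath_src_seq (z : InfPath G) (n : ℕ) :
    G.src (z.seq n) = rngTo G z.start ((List.range n).map z.seq) := by
  induction n with
  | zero => simp [rngTo, InfPath.start]
  | succ m ih =>
    have hlen : m < ((List.range (m + 1)).map z.seq).length := by simp
    have : ((List.range (m+1)).map z.seq).take (m+1) = (List.range (m+1)).map z.seq := by
      simp
    have h2 : rngTo G z.start ((List.range (m+1)).map z.seq)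
        = G.rng (((List.range (m+1)).map z.seq)[m]'hlen) := by
      conv_lhs => rw [← this]
      exact rngTo_take_succ m hlen
    rw [h2]
    have : ((List.range (m+1)).map z.seq)[m]'hlen = z.seq m := by simp
    rw [this, z.valid m]

theorem infPath_valid_list (z : InfPath G) (n : ℕ) :
    Valid G z.start ((List.range n).map z.seq) := by
  induction n with
  | zero => trivial
  | succ m ih =>
    have : (List.range (m+1)).map z.seq = ((List.range m).map z.seq) ++ [z.seq m] := by
      rw [List.range_succ, List.map_append]; rfl
    rw [this, valid_append]
    refine ⟨ih, ?_, trivial⟩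
    rw [← infPath_src_seq]

/-- The finite prefix of an infinite path. -/
def takeP (n : ℕ) (z : InfPath G) : FinPath G :=
  ⟨z.start, (List.range n).map z.seq, infPath_valid_list z n⟩

@[simp] theorem takeP_start (n : ℕ) (z : InfPath G) : (takeP n z).start = z.start := rfl

@[simp] theorem takeP_len (n : ℕ) (z : InfPath G) : (takeP n z).edges.length = n := by
  simp [takeP]

theorem takeP_getElem (n : ℕ) (z : InfPath G) (i : ℕ) (h : i < n) :
    (takeP n z).edges[i]'(by simpa using h) = z.seq i := by simp [takeP]

theorem takeP_rngF (n : ℕ) (z : InfPath G) : (takeP n z).rngF = G.src (z.seq n) :=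
  (infPath_src_seq z n).symm

/-- The shift of an infinite path. -/
def shiftI (n : ℕ) (z : InfPath G) : InfPath G :=
  ⟨fun i => z.seq (n + i), fun i => by
    show G.src (z.seq (n + (i+1))) = G.rng (z.seq (n + i))
    rw [← Nat.add_assoc]; exact z.valid (n + i)⟩

@[simp] theorem shiftI_seq (n : ℕ) (z : InfPath G) (i : ℕ) :
    (shiftI n z).seq i = z.seq (n + i) := rfl

theorem shiftI_start (n : ℕ) (z : InfPath G) :
    (shiftI n z).start = G.src (z.seq n) := by
  simp [InfPath.start]

theorem shiftI_start' (n : ℕ) (z : InfPath G) :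
    (shiftI n z).start = (takeP n z).rngF := by
  rw [shiftI_start, takeP_rngF]

theorem takeP_concatInf_shiftI (n : ℕ) (z : InfPath G) :
    z = (takeP n z).concatInf (shiftI n z) (shiftI_start' n z) := by
  apply ipext
  intro i
  rw [concatInf_seq]
  by_cases hi : i < n
  · simp only [takeP_len] at *
    rw [dif_pos (by simpa [takeP] using hi)]
    exact (takeP_getElem n z i hi).symm
  · rw [dif_neg (by simpa [takeP] using hi)]
    simp only [shiftI_seq, takeP]
    congr 1
    simp only [List.length_map, List.length_range]
    omega

end Infra


section Infra2

variable {G}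

/-- `α` is a prefix of the path `x`, stated coordinatewise. -/
def PrefOf (α : FinPath G) (x : PathSp G) : Prop :=
  startOf G x = α.start ∧ ∀ i < α.edges.length, nthEdge G x i = α.edges[i]?

theorem pathExt {x y : PathSp G} (h1 : startOf G x = startOf G y)
    (h2 : ∀ i, nthEdge G x i = nthEdge G y i) : x = y := by
  cases x with
  | inl φ =>
    cases y with
    | inl ψ =>
      have he : φ.edges = ψ.edges := by
        apply List.ext_getElem?
        intro i; exact h2 i
      have hs : φ.start = ψ.start := h1
      rw [fpext hs he]
    | inr w =>
      have := h2 φ.edges.length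
      simp [nthEdge] at this
  | inr z =>
    cases y with
    | inl ψ =>
      have := h2 ψ.edges.length
      simp [nthEdge] at this
    | inr w =>
      congr 1
      apply ipext
      intro i
      have := h2 i
      simpa [nthEdge] using this

theorem mem_Dset_iff {α : FinPath G} {x : PathSp G} :
    x ∈ Dset G α ↔ PrefOf α x := by
  constructor
  · rintro (⟨β, h, rfl⟩ | ⟨w, h, rfl⟩)
    · constructor
      · rfl
      · intro i hi
        show (α.edges ++ β.edges)[i]? = α.edges[i]?
        rw [List.getElem?_append_left hi]
    · constructor
      · exact concatInf_start α w h
      · intro i hi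
        show some ((α.concatInf w h).seq i) = α.edges[i]?
        rw [concatInf_seq, dif_pos hi, List.getElem?_eq_getElem hi]
  · rintro ⟨h1, h2⟩
    cases x with
    | inl φ =>
      left
      have hlen : α.edges.length ≤ φ.edges.length := by
        by_contra hc
        push_neg at hc
        have h3 : nthEdge G (Sum.inl φ) φ.edges.length = α.edges[φ.edges.length]? :=
          h2 _ hc
        rw [List.getElem?_eq_getElem hc] at h3
        have h4 : nthEdge G (Sum.inl φ) φ.edges.length = none := by
          simp [nthEdge]
        rw [h4] at h3
        exact nomatch h3
      have htake : φ.edges.take α.edges.length = α.edges := by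
        apply List.ext_getElem?
        intro i
        by_cases hi : i < α.edges.length
        · rw [List.getElem?_take_of_lt hi]
          exact h2 i hi
        · push_neg at hi
          rw [List.getElem?_eq_none_iff.2 (by simp only [List.length_take]; omega),
            List.getElem?_eq_none_iff.2 hi]
      have hstart : (diff G α φ).start = α.rngF := by
        show rngTo G φ.start (φ.edges.take α.edges.length) = rngTo G α.start α.edges
        rw [htake]
        have hs : φ.start = α.start := h1
        rw [hs]
      refine ⟨diff G α φ, hstart, ?_⟩
      congr 1
      apply fpext
      · exact h1
      · show φ.edges = α.edges ++ φ.edges.drop α.edges.length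
        conv_lhs => rw [← List.take_append_drop α.edges.length φ.edges]
        rw [htake]
    | inr z =>
      right
      have hpref : ∀ i, (hi : i < α.edges.length) → z.seq i = α.edges[i]'hi := by
        intro i hi
        have := h2 i hi
        simp only [nthEdge] at this
        rw [List.getElem?_eq_getElem hi] at this
        exact Option.some.inj this
      have htake : takeP α.edges.length z = α := by
        apply fpext
        · exact h1
        · apply List.ext_getElem (by simp [takeP])
          intro i hi₁ hi₂
          rw [takeP_getElem _ _ _ (by simpa [takeP] using hi₁)]
          exact hpref i hi₂
      have hstart : (shiftI α.edges.length z).start = α.rngF := by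
        rw [shiftI_start' α.edges.length z, htake]
      refine ⟨shiftI α.edges.length z, hstart, ?_⟩
      congr 1
      apply ipext
      intro i
      rw [concatInf_seq]
      by_cases hi : i < α.edges.length
      · rw [dif_pos hi]; exact hpref i hi
      · rw [dif_neg hi]
        show z.seq i = z.seq (α.edges.length + (i - α.edges.length))
        congr 1
        omega

theorem mem_Dset_self (φ : FinPath G) : (Sum.inl φ : PathSp G) ∈ Dset G φ := by
  refine mem_Dset_iff.2 ?_
  exact ⟨rfl, fun i hi => rfl⟩

theorem isOpen_Dset (α : FinPath G) : @IsOpen _ (pathTop G) (Dset G α) :=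
  TopologicalSpace.GenerateOpen.basic _ (Or.inl ⟨α, rfl⟩)

theorem isOpen_Dset_compl (α : FinPath G) : @IsOpen _ (pathTop G) (Dset G α)ᶜ :=
  TopologicalSpace.GenerateOpen.basic _ (Or.inr ⟨α, rfl⟩)

end Infra2


section Infra3

variable {G}

theorem sInter_subbasic : ∀ {f : Set (Set (PathSp G))}, f.Finite →
    f ⊆ (Set.range (Dset G) ∪ Set.range fun α => (Dset G α)ᶜ) →
    ∃ L L' : List (FinPath G),
      ⋂₀ f = {y | (∀ δ ∈ L, y ∈ Dset G δ) ∧ ∀ δ ∈ L', y ∉ Dset G δ} := by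
  intro f hfin
  refine Set.Finite.induction_on
    (motive := fun f _ => f ⊆ (Set.range (Dset G) ∪ Set.range fun α => (Dset G α)ᶜ) →
      ∃ L L' : List (FinPath G),
        ⋂₀ f = {y | (∀ δ ∈ L, y ∈ Dset G δ) ∧ ∀ δ ∈ L', y ∉ Dset G δ})
    f hfin (fun _ => ⟨[], [], by simp⟩) ?_
  intro s f hs hf ih hsub
  obtain ⟨L, L', hLL⟩ := ih (fun t ht => hsub (Set.mem_insert_of_mem _ ht))
  rcases hsub (Set.mem_insert _ _) with ⟨δ, rfl⟩ | ⟨δ, rfl⟩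
  · refine ⟨δ :: L, L', ?_⟩
    rw [Set.sInter_insert, hLL]
    ext y
    simp only [Set.mem_inter_iff, Set.mem_setOf_eq, List.mem_cons]
    constructor
    · rintro ⟨h1, h2, h3⟩
      exact ⟨fun ε hε => hε.elim (fun he => he ▸ h1) (h2 ε), h3⟩
    · rintro ⟨h2, h3⟩
      exact ⟨h2 δ (Or.inl rfl), fun ε hε => h2 ε (Or.inr hε), h3⟩
  · refine ⟨L, δ :: L', ?_⟩
    rw [Set.sInter_insert, hLL]
    ext y
    simp only [Set.mem_inter_iff, Set.mem_setOf_eq, List.mem_cons, Set.mem_compl_iff]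
    constructor
    · rintro ⟨h1, h2, h3⟩
      exact ⟨h2, fun ε hε => hε.elim (fun he => he ▸ h1) (h3 ε)⟩
    · rintro ⟨h2, h3⟩
      exact ⟨h3 δ (Or.inl rfl), h2, fun ε hε => h3 ε (Or.inr hε)⟩

theorem exists_subbasic {U : Set (PathSp G)} (hU : @IsOpen _ (pathTop G) U)
    {x : PathSp G} (hx : x ∈ U) :
    ∃ L L' : List (FinPath G),
      (∀ δ ∈ L, x ∈ Dset G δ) ∧ (∀ δ ∈ L', x ∉ Dset G δ) ∧
      ∀ y, (∀ δ ∈ L, y ∈ Dset G δ) → (∀ δ ∈ L', y ∉ Dset G δ) → y ∈ U := by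
  letI := pathTop G
  have hbasis := TopologicalSpace.isTopologicalBasis_of_subbasis
    (s := Set.range (Dset G) ∪ Set.range fun α => (Dset G α)ᶜ) rfl
  obtain ⟨v, hv, hxv, hvU⟩ := hbasis.exists_subset_of_mem_open hx hU
  obtain ⟨f, ⟨hfin, hsub⟩, rfl⟩ := hv
  obtain ⟨L, L', hLL⟩ := sInter_subbasic hfin hsub
  replace hxv : x ∈ ⋂₀ f := hxv
  replace hvU : ⋂₀ f ⊆ U := hvU
  rw [hLL] at hxv hvU
  exact ⟨L, L', hxv.1, hxv.2, fun y h1 h2 => hvU ⟨h1, h2⟩⟩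

/-- The cylinder condition: `y` agrees with `z` on the start and first `n` edges. -/
def CylMem (n : ℕ) (z : InfPath G) (y : PathSp G) : Prop :=
  startOf G y = z.start ∧ ∀ i < n, nthEdge G y i = some (z.seq i)

theorem inr_mem_cyl (n : ℕ) (z : InfPath G) : CylMem n z (Sum.inr z) :=
  ⟨rfl, fun i _ => rfl⟩

theorem cyl_mem_Dset {n : ℕ} {z : InfPath G} {y : PathSp G} (hy : CylMem n z y)
    {δ : FinPath G} (hδ : (Sum.inr z : PathSp G) ∈ Dset G δ) (hn : δ.edges.length ≤ n) :
    y ∈ Dset G δ := by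
  replace hδ := mem_Dset_iff.1 hδ
  refine mem_Dset_iff.2 ?_
  obtain ⟨hs, he⟩ := hδ
  refine ⟨hy.1.trans hs, fun i hi => ?_⟩
  rw [hy.2 i (lt_of_lt_of_le hi hn)]
  exact he i hi

theorem cyl_nbhd {U : Set (PathSp G)} (hU : @IsOpen _ (pathTop G) U)
    {z : InfPath G} (hx : (Sum.inr z : PathSp G) ∈ U) :
    ∃ n, ∀ y, CylMem n z y → y ∈ U := by
  obtain ⟨L, L', h1, h2, h3⟩ := exists_subbasic hU hx
  refine ⟨((L ++ L').map fun δ => δ.edges.length).sum, fun y hy => ?_⟩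
  have hle : ∀ δ ∈ L ++ L', δ.edges.length ≤ ((L ++ L').map fun δ => δ.edges.length).sum := by
    intro δ hδ
    exact List.single_le_sum (fun x _ => Nat.zero_le x) _ (List.mem_map_of_mem hδ)
  apply h3 y
  · intro δ hδ
    exact cyl_mem_Dset hy (h1 δ hδ) (hle δ (List.mem_append_left _ hδ))
  · intro δ hδ hyδ
    apply h2 δ hδ
    rw [mem_Dset_iff] at hyδ
    refine mem_Dset_iff.2 ?_
    obtain ⟨hs, he⟩ := hyδ
    refine ⟨hy.1.symm.trans hs, fun i hi => ?_⟩
    rw [← he i hi, hy.2 i (lt_of_lt_of_le hi (hle δ (List.mem_append_right _ hδ)))]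
    rfl

end Infra3


section Infra4

variable {G}

theorem inr_eq_concatInf {ζ : InfPath G} {E : FinPath G} {w' : InfPath G}
    (h' : w'.start = E.rngF)
    (hpre : ∀ i, (hi : i < E.edges.length) → ζ.seq i = E.edges[i]'hi)
    (htail : ∀ i, ζ.seq (E.edges.length + i) = w'.seq i) :
    ζ = E.concatInf w' h' := by
  apply ipext; intro i; rw [concatInf_seq]
  by_cases hi : i < E.edges.length
  · rw [dif_pos hi]; exact hpre i hi
  · rw [dif_neg hi, ← htail (i - E.edges.length)]
    congr 1; omega

theorem concatInf_seq_ge (A : FinPath G) (w : InfPath G) (h : w.start = A.rngF)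
    {i : ℕ} (hi : A.edges.length ≤ i) :
    (A.concatInf w h).seq i = w.seq (i - A.edges.length) := by
  rw [concatInf_seq, dif_neg (by omega)]

theorem concatInf_seq_lt (A : FinPath G) (w : InfPath G) (h : w.start = A.rngF)
    {i : ℕ} (hi : i < A.edges.length) :
    (A.concatInf w h).seq i = A.edges[i]'hi := by
  rw [concatInf_seq, dif_pos hi]

theorem tailEq_trans_right {x t t' : PathSp G} (hx : ∀ φ : FinPath G, x ≠ Sum.inl φ)
    (h1 : TailEq G x t) (h2 : TailEq G t t') : TailEq G x t' := by
  rcases h1 with ⟨α, β, γ, u1, u2, hx1, _⟩ | ⟨A, B, w, hA, hB, hx1, ht1⟩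
  · exact absurd hx1 (hx _)
  rcases h2 with ⟨α, β, γ, u1, u2, ht2, _⟩ | ⟨C, D, w', hC, hD, ht2, ht'⟩
  · rw [ht1] at ht2; exact nomatch ht2
  have hζ : B.concatInf w hB = C.concatInf w' hC := by
    rw [ht1] at ht2; exact Sum.inr.inj ht2
  rcases le_or_gt B.edges.length C.edges.length with hbc | hbc
  · -- common tail is w' ; x = (A ++ takeP q w) · w'
    set q := C.edges.length - B.edges.length with hq
    have hw' : ∀ i, w'.seq i = w.seq (q + i) := by
      intro i
      have e1 : (B.concatInf w hB).seq (C.edges.length + i)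
          = w.seq (C.edges.length + i - B.edges.length) :=
        concatInf_seq_ge _ _ _ (by omega)
      have e2 : (C.concatInf w' hC).seq (C.edges.length + i) = w'.seq i := by
        rw [concatInf_seq_ge _ _ _ (by omega)]
        congr 1; omega
      rw [hζ, e2] at e1
      rw [e1]; congr 1; omega
    have hek : (takeP q w).start = A.rngF := hA
    have hE : w'.start = (A.concat (takeP q w) hek).rngF := by
      rw [FinPath.rngF_concat, takeP_rngF]
      show G.src (w'.seq 0) = G.src (w.seq q)
      rw [hw' 0, Nat.add_zero]
    refine Or.inr ⟨A.concat (takeP q w) hek, D, w', hE, hD, ?_, ht'⟩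
    rw [hx1]
    congr 1
    apply inr_eq_concatInf
    · intro i hi
      simp only [FinPath.concat, List.length_append, takeP_len] at hi ⊢
      by_cases hiA : i < A.edges.length
      · rw [List.getElem_append_left hiA]
        exact concatInf_seq_lt A w hA hiA
      · rw [List.getElem_append_right (by omega)]
        rw [concatInf_seq_ge A w hA (by omega)]
        rw [takeP_getElem _ _ _ (by omega)]
    · intro i
      show (A.concatInf w hA).seq ((A.edges ++ (takeP q w).edges).length + i) = w'.seq i
      rw [concatInf_seq_ge A w hA (by simp only [List.length_append, takeP_len]; omega)]
      rw [hw' i]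
      congr 1
      simp only [List.length_append, takeP_len]
      omega
  · -- common tail is w ; t' = (D ++ takeP q w') · w
    set q := B.edges.length - C.edges.length with hq
    have hw : ∀ i, w.seq i = w'.seq (q + i) := by
      intro i
      have e1 : (C.concatInf w' hC).seq (B.edges.length + i)
          = w'.seq (B.edges.length + i - C.edges.length) :=
        concatInf_seq_ge _ _ _ (by omega)
      have e2 : (B.concatInf w hB).seq (B.edges.length + i) = w.seq i := by
        rw [concatInf_seq_ge _ _ _ (by omega)]
        congr 1; omega
      rw [hζ, e1] at e2
      rw [← e2]; congr 1; omega
    have hek : (takeP q w').start = D.rngF := hD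
    have hE : w.start = (D.concat (takeP q w') hek).rngF := by
      rw [FinPath.rngF_concat, takeP_rngF]
      show G.src (w.seq 0) = G.src (w'.seq q)
      rw [hw 0, Nat.add_zero]
    refine Or.inr ⟨A, D.concat (takeP q w') hek, w, hA, hE, hx1, ?_⟩
    rw [ht']
    congr 1
    apply inr_eq_concatInf
    · intro i hi
      simp only [FinPath.concat, List.length_append, takeP_len] at hi ⊢
      by_cases hiD : i < D.edges.length
      · rw [List.getElem_append_left hiD]
        exact concatInf_seq_lt D w' hD hiD
      · rw [List.getElem_append_right (by omega)]
        rw [concatInf_seq_ge D w' hD (by omega)]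
        rw [takeP_getElem _ _ _ (by omega)]
    · intro i
      show (D.concatInf w' hD).seq ((D.edges ++ (takeP q w').edges).length + i) = w.seq i
      rw [concatInf_seq_ge D w' hD (by simp only [List.length_append, takeP_len]; omega)]
      rw [hw i]
      congr 1
      simp only [List.length_append, takeP_len]
      omega

theorem src_seq_len_of_pref {Φ : FinPath G} {τ : InfPath G}
    (h : (Sum.inr τ : PathSp G) ∈ Dset G Φ) :
    G.src (τ.seq Φ.edges.length) = Φ.rngF := by
  rcases h with ⟨β, hb, heq⟩ | ⟨w, hw, heq⟩
  · exact nomatch heq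
  · have hτ : τ = Φ.concatInf w hw := Sum.inr.inj heq
    rw [hτ, concatInf_seq_ge _ _ _ le_rfl, Nat.sub_self]
    exact hw

end Infra4


section Infra5

variable {G}

theorem inr_mem_Dset_takeP (n : ℕ) (z : InfPath G) :
    (Sum.inr z : PathSp G) ∈ Dset G (takeP n z) := by
  refine mem_Dset_iff.2 ?_
  refine ⟨rfl, fun i hi => ?_⟩
  rw [List.getElem?_eq_getElem hi, takeP_getElem n z i (by simpa using hi)]
  rfl

theorem inl_not_mem_Dset_of_long {Φ ρ : FinPath G} (h : Φ.edges.length < ρ.edges.length) :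
    (Sum.inl Φ : PathSp G) ∉ Dset G ρ := by
  refine mt mem_Dset_iff.1 ?_
  rintro ⟨-, h2⟩
  have h3 := h2 Φ.edges.length h
  rw [List.getElem?_eq_getElem h] at h3
  have h4 : nthEdge G (Sum.inl Φ) Φ.edges.length = none := by simp [nthEdge]
  rw [h4] at h3
  exact nomatch h3

theorem src_seq_eq_of_agree {τ ζ : InfPath G} {n : ℕ} (hst : τ.start = ζ.start)
    (hag : ∀ i < n, τ.seq i = ζ.seq i) : G.src (τ.seq n) = G.src (ζ.seq n) := by
  rw [infPath_src_seq, infPath_src_seq, hst]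
  congr 1
  apply List.ext_getElem (by simp)
  intro i hi₁ hi₂
  simp only [List.getElem_map, List.getElem_range]
  exact hag i (by simpa using hi₁)

/-- the tail-equivalence class of an infinite-type point, closed up, is invariant. -/
theorem closure_tailClass_invariant (x₀ : PathSp G)
    (hx₀ : ∀ φ : FinPath G, x₀ ≠ Sum.inl φ) :
    InvariantS G ((@closure _ (pathTop G) {t | TailEq G x₀ t}) ∩ Xset G) := by
  letI := pathTop G
  classical
  set T : Set (PathSp G) := {t | TailEq G x₀ t} with hT
  have hTinr : ∀ t ∈ T, ∀ φ : FinPath G, t ≠ Sum.inl φ := by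
    intro t ht φ hcon
    rcases ht with ⟨a, b, c, u1, u2, he, _⟩ | ⟨a, b, wt, u1, u2, he, ht'⟩
    · exact hx₀ _ he
    · rw [hcon] at ht'; exact nomatch ht'
  rintro x ⟨hxcl, hxX⟩ y hxy
  rcases hxy with ⟨α, β, γ, hγ1, hγ2, hxeq, hyeq⟩ | ⟨α, β, w, hα, hβ, hxeq, hyeq⟩
  · -- finite case
    constructor
    · -- y ∈ closure T
      rw [mem_closure_iff]
      intro U hU hyU
      obtain ⟨L, L', h1, h2, h3⟩ := exists_subbasic hU hyU
      set Φ := α.concat γ hγ1 with hΦ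
      set Ψ := β.concat γ hγ2 with hΨ
      set L'' := L'.filter (fun δ => decide (IsPref G Ψ δ)) with hL''
      have hδlen : ∀ δ ∈ L'', Ψ.edges.length < δ.edges.length := by
        intro δ hδ
        rw [hL'', List.mem_filter] at hδ
        obtain ⟨hδL', hδp⟩ := hδ
        have hp : IsPref G Ψ δ := of_decide_eq_true hδp
        rcases Nat.lt_or_ge Ψ.edges.length δ.edges.length with h | h
        · exact h
        · exfalso
          have heq : Ψ = δ := by
            apply fpext hp.1
            exact List.IsPrefix.eq_of_length_le hp.2 (by omega)
          apply h2 δ hδL'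
          rw [hyeq, ← heq]
          exact mem_Dset_self Ψ
      have hΨrng : Ψ.rngF = Φ.rngF := by
        rw [hΦ, hΨ, FinPath.rngF_concat, FinPath.rngF_concat]
      have hdstart : ∀ δ ∈ L'', (diff G Ψ δ).start = Φ.rngF := by
        intro δ hδ
        rw [hL'', List.mem_filter] at hδ
        have hp : IsPref G Ψ δ := of_decide_eq_true hδ.2
        show rngTo G δ.start (δ.edges.take Ψ.edges.length) = Φ.rngF
        obtain ⟨rest, hrest⟩ := hp.2
        have htake : δ.edges.take Ψ.edges.length = Ψ.edges := by
          rw [← hrest, List.take_left']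
          rfl
        rw [htake, ← hp.1, ← hΨrng]
        rfl
      set U₀ : Set (PathSp G) :=
        Dset G Φ ∩ ⋂ δ ∈ {δ | δ ∈ L''}, (Dset G (catP G Φ (diff G Ψ δ)))ᶜ with hU₀
      have hU₀open : IsOpen U₀ := by
        apply IsOpen.inter (isOpen_Dset Φ)
        exact (List.finite_toSet L'').isOpen_biInter
          (fun δ _ => isOpen_Dset_compl _)
      have hxU₀ : x ∈ U₀ := by
        constructor
        · rw [hxeq]; exact mem_Dset_self Φ
        · rw [Set.mem_iInter₂]
          intro δ hδ
          rw [hxeq]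
          apply inl_not_mem_Dset_of_long
          have hcat : catP G Φ (diff G Ψ δ) = Φ.concat (diff G Ψ δ) (hdstart δ hδ) := by
            rw [catP, dif_pos (hdstart δ hδ)]
          rw [hcat]
          show Φ.edges.length < (Φ.edges ++ (δ.edges.drop Ψ.edges.length)).length
          have := hδlen δ hδ
          simp only [List.length_append, List.length_drop]
          omega
      obtain ⟨t, htU₀, htT⟩ := mem_closure_iff.1 hxcl U₀ hU₀open hxU₀
      obtain ⟨τ, hτ⟩ : ∃ τ : InfPath G, t = Sum.inr τ := by
        cases t with
        | inl φ => exact absurd rfl (hTinr _ htT φ)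
        | inr τ => exact ⟨τ, rfl⟩
      rw [hτ] at htU₀
      have htD : (Sum.inr τ : PathSp G) ∈ Dset G Φ := htU₀.1
      have htpref := mem_Dset_iff.1 htD
      set w₂ := shiftI Φ.edges.length τ with hw₂
      have hΦs : w₂.start = Φ.rngF := by
        rw [hw₂, shiftI_start]
        exact src_seq_len_of_pref htD
      have hs : w₂.start = Ψ.rngF := by rw [hΦs, hΨrng]
      have hτdec : τ = Φ.concatInf w₂ hΦs := by
        apply inr_eq_concatInf
        · intro i hi
          have := htpref.2 i hi
          rw [List.getElem?_eq_getElem hi] at this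
          exact Option.some.inj this
        · intro i; rfl
      set t' : PathSp G := Sum.inr (Ψ.concatInf w₂ hs) with ht'def
      have htt' : TailEq G t t' := by
        refine Or.inr ⟨Φ, Ψ, w₂, hΦs, hs, ?_, rfl⟩
        rw [hτ]
        congr 1
      have ht'T : t' ∈ T := tailEq_trans_right hx₀ htT htt'
      refine ⟨t', ?_, ht'T⟩
      -- t' ∈ U
      apply h3
      · -- sets in L
        intro δ hδ
        have hyδ := mem_Dset_iff.1 (h1 δ hδ)
        rw [hyeq] at hyδ
        rw [ht'def]; refine mem_Dset_iff.2 ?_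
        refine ⟨(concatInf_start Ψ w₂ hs).trans hyδ.1, fun i hi => ?_⟩
        have hiΨ : i < Ψ.edges.length := by
          by_contra hc
          push_neg at hc
          have h5 := hyδ.2 i hi
          simp only [nthEdge] at h5
          rw [List.getElem?_eq_none_iff.2 hc, List.getElem?_eq_getElem hi] at h5
          exact nomatch h5
        have h5 := hyδ.2 i hi
        simp only [nthEdge] at h5
        show some ((Ψ.concatInf w₂ hs).seq i) = δ.edges[i]?
        rw [concatInf_seq_lt Ψ w₂ hs hiΨ, ← h5, List.getElem?_eq_getElem hiΨ]
      · -- sets in L'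
        intro δ hδ hcontra
        rw [ht'def] at hcontra
        have hct := mem_Dset_iff.1 hcontra
        by_cases hlen : δ.edges.length ≤ Ψ.edges.length
        · apply h2 δ hδ
          rw [hyeq]; refine mem_Dset_iff.2 ?_
          refine ⟨(concatInf_start Ψ w₂ hs).symm.trans hct.1, fun i hi => ?_⟩
          have hiΨ : i < Ψ.edges.length := by omega
          have h5 := hct.2 i hi
          simp only [nthEdge] at h5
          rw [concatInf_seq_lt Ψ w₂ hs hiΨ] at h5
          show Ψ.edges[i]? = δ.edges[i]?
          rw [List.getElem?_eq_getElem hiΨ, h5]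
        · push_neg at hlen
          have hstΨδ : Ψ.start = δ.start := by
            rw [← concatInf_start Ψ w₂ hs]
            exact hct.1
          have htake : δ.edges.take Ψ.edges.length = Ψ.edges := by
            apply List.ext_getElem (by simp only [List.length_take]; omega)
            intro i hi₁ hi₂
            have h5 := hct.2 i (by omega)
            simp only [nthEdge] at h5
            rw [List.getElem?_eq_getElem (by omega : i < δ.edges.length)] at h5
            have h6 : ((Ψ.concatInf w₂ hs).seq i) = Ψ.edges[i]'hi₂ :=
              concatInf_seq_lt Ψ w₂ hs hi₂
            have h7 := Option.some.inj h5
            rw [List.getElem_take]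
            exact (h7.symm.trans h6)
          have hpref : IsPref G Ψ δ := by
            refine ⟨hstΨδ, δ.edges.drop Ψ.edges.length, ?_⟩
            conv_rhs => rw [← List.take_append_drop Ψ.edges.length δ.edges]
            rw [htake]
          have hδL'' : δ ∈ L'' := by
            rw [hL'', List.mem_filter]
            exact ⟨hδ, decide_eq_true hpref⟩
          have hnot := Set.mem_iInter₂.1 htU₀.2 δ hδL''
          apply hnot
          have hcat : catP G Φ (diff G Ψ δ) = Φ.concat (diff G Ψ δ) (hdstart δ hδL'') := by
            rw [catP, dif_pos]
          rw [hcat]; refine mem_Dset_iff.2 ?_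
          refine ⟨htpref.1, fun i hi => ?_⟩
          have hi' : i < Φ.edges.length + (δ.edges.length - Ψ.edges.length) := by
            have := hi
            simp only [FinPath.concat, diff, List.length_append, List.length_drop] at this
            omega
          show some (τ.seq i) = (Φ.edges ++ δ.edges.drop Ψ.edges.length)[i]?
          by_cases hiΦ : i < Φ.edges.length
          · rw [List.getElem?_append_left hiΦ, ← htpref.2 i hiΦ]
            rfl
          · push_neg at hiΦ
            rw [List.getElem?_append_right hiΦ, List.getElem?_drop]
            set j := Ψ.edges.length + (i - Φ.edges.length) with hj
            have hjδ : j < δ.edges.length := by omega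
            rw [List.getElem?_eq_getElem hjδ]
            have h5 := hct.2 j hjδ
            simp only [nthEdge] at h5
            rw [List.getElem?_eq_getElem hjδ] at h5
            have h6 := Option.some.inj h5
            rw [← h6]
            congr 1
            rw [concatInf_seq_ge Ψ w₂ hs (by omega)]
            show τ.seq i = τ.seq (Φ.edges.length + (j - Ψ.edges.length))
            congr 1
            omega
    · -- y ∈ Xset
      rw [hyeq]
      show Vinf G (β.concat γ hγ2).rngF
      rw [FinPath.rngF_concat]
      rw [hxeq] at hxX
      have hv : Vinf G (α.concat γ hγ1).rngF := hxX
      rwa [FinPath.rngF_concat] at hv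
  · -- infinite case
    constructor
    · rw [mem_closure_iff]
      intro U hU hyU
      rw [hyeq] at hyU
      obtain ⟨n₀, hcyl⟩ := cyl_nbhd hU hyU
      set η := β.concatInf w hβ with hη
      set ζ := α.concatInf w hα with hζ
      set n := max n₀ β.edges.length with hn
      set a := α.edges.length with ha
      set b := β.edges.length with hb
      set m := a + (n - b) with hm
      have hxD : x ∈ Dset G (takeP m ζ) := by
        rw [hxeq]; exact inr_mem_Dset_takeP m ζ
      obtain ⟨t, htD, htT⟩ := mem_closure_iff.1 hxcl _ (isOpen_Dset (takeP m ζ)) hxD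
      obtain ⟨τ, hτ⟩ : ∃ τ : InfPath G, t = Sum.inr τ := by
        cases t with
        | inl φ => exact absurd rfl (hTinr _ htT φ)
        | inr τ => exact ⟨τ, rfl⟩
      rw [hτ] at htD
      have htpref := mem_Dset_iff.1 htD
      have hagree : ∀ i < m, τ.seq i = ζ.seq i := by
        intro i hi
        have hi' : i < (takeP m ζ).edges.length := by simpa using hi
        have h5 := htpref.2 i hi'
        simp only [nthEdge] at h5
        rw [List.getElem?_eq_getElem hi'] at h5
        have h6 := Option.some.inj h5
        rw [h6, takeP_getElem m ζ i hi]
      set w₂ := shiftI a τ with hw₂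
      have hsζ : G.src (ζ.seq a) = w.start := by
        have : ζ.seq a = w.seq 0 := by
          rw [hζ, concatInf_seq_ge α w hα le_rfl, Nat.sub_self]
        rw [this]; rfl
      have hs : w₂.start = β.rngF := by
        rw [hw₂, shiftI_start]
        rw [src_seq_eq_of_agree (n := a) htpref.1 (fun i hi => hagree i (by omega))]
        · rw [hsζ]; exact hβ
      set t' : PathSp G := Sum.inr (β.concatInf w₂ hs) with ht'def
      have hΦs : w₂.start = (takeP a τ).rngF := shiftI_start' a τ
      have htt' : TailEq G t t' := by
        refine Or.inr ⟨takeP a τ, β, w₂, hΦs, hs, ?_, rfl⟩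
        rw [hτ]
        congr 1
        exact takeP_concatInf_shiftI a τ
      have ht'T : t' ∈ T := tailEq_trans_right hx₀ htT htt'
      refine ⟨t', ?_, ht'T⟩
      apply hcyl
      constructor
      · show (β.concatInf w₂ hs).start = η.start
        rw [concatInf_start, hη, concatInf_start]
      · intro i hi
        have hin : i < n := lt_of_lt_of_le hi (le_max_left _ _)
        show some ((β.concatInf w₂ hs).seq i) = some (η.seq i)
        congr 1
        by_cases hib : i < b
        · rw [concatInf_seq_lt β w₂ hs hib, hη, concatInf_seq_lt β w hβ hib]
        · push_neg at hib
          rw [concatInf_seq_ge β w₂ hs hib, hη, concatInf_seq_ge β w hβ hib]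
          rw [hw₂]
          show τ.seq (a + (i - b)) = w.seq (i - b)
          rw [hagree (a + (i - b)) (by omega)]
          rw [hζ, concatInf_seq_ge α w hα (by omega)]
          congr 1
          omega
    · rw [hyeq]; trivial

end Infra5


section Infra6

variable {G}

theorem valid_take {v : G.V} {l : List G.Ed} (n : ℕ) (h : Valid G v l) :
    Valid G v (l.take n) := by
  have h' : Valid G v (l.take n ++ l.drop n) := by
    rw [List.take_append_drop]; exact h
  exact ((valid_append G _ _ _).mp h').1

open Classical in
theorem first_return {v : G.V} {l : List G.Ed} (hv : Valid G v l)
    (hr : rngTo G v l = v) (hne : l ≠ []) :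
    ∃ k, 1 ≤ k ∧ k ≤ l.length ∧ rngTo G v (l.take k) = v ∧
      LoopAt G v ⟨v, l.take k, valid_take k hv⟩ := by
  have hQ : ∃ k, 1 ≤ k ∧ k ≤ l.length ∧ rngTo G v (l.take k) = v := by
    refine ⟨l.length, ?_, le_rfl, ?_⟩
    · cases l with
      | nil => exact absurd rfl hne
      | cons e t => simp
    · rwa [List.take_length]
  set k := Nat.find hQ with hk
  obtain ⟨hk1, hk2, hk3⟩ := Nat.find_spec hQ
  refine ⟨k, hk1, hk2, hk3, ?_, rfl, hk3, ?_⟩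
  · have : (l.take k).length = k := by
      rw [List.length_take]; omega
    intro hcon
    have h0 : List.take k l = [] := hcon
    rw [h0] at this
    simp at this
    omega
  · intro i e hi he
    have hlen : (l.take k).length = k := by
      rw [List.length_take]; omega
    rw [hlen] at hi
    have hmin := Nat.find_min hQ (m := i + 1) (by omega)
    push_neg at hmin
    have h4 := hmin (by omega) (by omega)
    have h5 : (l.take k).take (i+1) = l.take (i+1) := by
      rw [List.take_take]
      congr 1
      omega
    have h6 : rngTo G v ((l.take k).take (i + 1)) = G.rng e := by
      apply rngTo_take_succ (l := l.take k) i (by omega) |>.trans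
      congr 1
      have := he
      rw [List.getElem?_eq_getElem (by omega : i < (l.take k).length)] at this
      exact Option.some.inj this
    rw [h5] at h6
    intro hcon
    rw [hcon] at h6
    exact h4 h6

theorem cycle_pattern_aux (μ : FinPath G) {v : G.V}
    (huniq : ∀ α : FinPath G, LoopAt G v α → α = μ) :
    ∀ n, ∀ l : List G.Ed, l.length ≤ n → (hv : Valid G v l) → rngTo G v l = v →
      ∀ i, i < l.length → l[i]? = μ.edges[i % μ.edges.length]? := by
  intro n
  induction n with
  | zero => intro l h _ _ i hi; omega
  | succ n ih =>
    intro l hlen hv hr i hi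
    have hne : l ≠ [] := by
      intro hcon; rw [hcon] at hi; simp at hi
    obtain ⟨k, hk1, hk2, hk3, hloop⟩ := first_return hv hr hne
    have hμeq := huniq _ hloop
    have htake : l.take k = μ.edges := congrArg FinPath.edges hμeq
    have hkp : k = μ.edges.length := by
      rw [← htake, List.length_take]; omega
    rcases Nat.lt_or_ge i k with hik | hik
    · rw [← List.getElem?_take_of_lt hik, htake]
      congr 1
      rw [Nat.mod_eq_of_lt (by omega)]
    · have hvd : Valid G v (l.drop k) := by
        have := valid_drop G k hv
        rwa [hk3] at this
      have hrd : rngTo G v (l.drop k) = v := by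
        have := rngTo_append G (l.take k) (l.drop k) v
        rw [List.take_append_drop, hk3] at this
        rw [← this, hr]
      have hld : (l.drop k).length ≤ n := by
        rw [List.length_drop]; omega
      have := ih (l.drop k) hld hvd hrd (i - k) (by rw [List.length_drop]; omega)
      rw [List.getElem?_drop] at this
      have hik' : k + (i - k) = i := by omega
      rw [hik'] at this
      rw [this]
      congr 1
      rw [hkp] at hik
      conv_rhs => rw [show i = (i - μ.edges.length) + μ.edges.length from by omega]
      rw [Nat.add_mod_right, hkp]

theorem loopAt_pos_len {v : G.V} {μ : FinPath G} (hμ : LoopAt G v μ) :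
    0 < μ.edges.length := by
  cases h : μ.edges with
  | nil => exact absurd h hμ.1
  | cons e t => simp

theorem inf_pattern (μ : FinPath G) {v : G.V} (hμ : LoopAt G v μ)
    (huniq : ∀ α : FinPath G, LoopAt G v α → α = μ) (ζ : InfPath G)
    (hstart : ζ.start = v) (hvis : ∀ N, ∃ M, N ≤ M ∧ G.src (ζ.seq M) = v) :
    ∀ i, ζ.seq i = μ.edges[i % μ.edges.length]'(Nat.mod_lt _ (loopAt_pos_len hμ)) := by
  intro i
  obtain ⟨M, hM1, hM2⟩ := hvis (i + 1)
  set l := (List.range M).map ζ.seq with hl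
  have hvl : Valid G v l := by
    rw [hl, ← hstart]; exact infPath_valid_list ζ M
  have hsrc : G.src (ζ.seq M) = rngTo G ζ.start ((List.range M).map ζ.seq) :=
    infPath_src_seq ζ M
  have hrl : rngTo G v l = v := by
    rw [hl, ← hstart, ← hsrc, hM2, hstart]
  have hil : i < l.length := by simp [hl]; omega
  have := cycle_pattern_aux μ huniq l.length l le_rfl hvl hrl i hil
  rw [List.getElem?_eq_getElem hil] at this
  have hmod : i % μ.edges.length < μ.edges.length := Nat.mod_lt _ (loopAt_pos_len hμ)
  rw [List.getElem?_eq_getElem hmod] at this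
  have h5 := Option.some.inj this
  rw [← h5]
  simp [hl]

/-- The periodic infinite path obtained by repeating a cycle. -/
def loopInf (μ : FinPath G) (hpos : 0 < μ.edges.length) (hcyc : μ.rngF = μ.start) :
    InfPath G where
  seq i := μ.edges[i % μ.edges.length]'(Nat.mod_lt _ hpos)
  valid i := by
    have h1 : (i + 1) % μ.edges.length = (i % μ.edges.length + 1) % μ.edges.length := by
      conv_lhs => rw [← Nat.mod_add_mod]
    have hr : i % μ.edges.length < μ.edges.length := Nat.mod_lt _ hpos
    rcases Nat.lt_or_ge (i % μ.edges.length + 1) μ.edges.length with h | h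
    · have h2 : (i + 1) % μ.edges.length = i % μ.edges.length + 1 := by
        rw [h1, Nat.mod_eq_of_lt h]
      simp only [h2]
      exact valid_chain μ.valid _ h
    · have hpe : i % μ.edges.length + 1 = μ.edges.length := by omega
      have h2 : (i + 1) % μ.edges.length = 0 := by
        rw [h1, hpe, Nat.mod_self]
      simp only [h2]
      rw [valid_head μ.valid hpos]
      have h3 : rngTo G μ.start (μ.edges.take (i % μ.edges.length + 1)) =
          G.rng (μ.edges[i % μ.edges.length]'hr) := rngTo_take_succ _ hr
      rw [hpe, List.take_length] at h3
      rw [← h3]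
      exact hcyc.symm

theorem loopInf_start (μ : FinPath G) (hpos : 0 < μ.edges.length)
    (hcyc : μ.rngF = μ.start) : (loopInf μ hpos hcyc).start = μ.start := by
  show G.src ((loopInf μ hpos hcyc).seq 0) = μ.start
  show G.src (μ.edges[0 % μ.edges.length]'_) = μ.start
  have h0 : 0 % μ.edges.length = 0 := Nat.zero_mod _
  simp only [h0]
  exact valid_head μ.valid hpos

theorem loopInf_seq (μ : FinPath G) (hpos : 0 < μ.edges.length)
    (hcyc : μ.rngF = μ.start) (i : ℕ) :
    (loopInf μ hpos hcyc).seq i = μ.edges[i % μ.edges.length]'(Nat.mod_lt _ hpos) := rfl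

end Infra6


section Reverse

variable {G}

theorem dense_implies_condK
    (hdense : ∀ F : Set (PathSp G), F ⊆ Xset G →
        (∃ C : Set (PathSp G), @IsClosed (PathSp G) (pathTop G) C ∧ F = C ∩ Xset G) →
        InvariantS G F →
        F ⊆ @closure (PathSp G) (pathTop G) {x | x ∈ F ∧ TrivIso G x}) :
    CondK G := by
  letI : TopologicalSpace (PathSp G) := pathTop G
  letI : TopologicalSpace (FinPath G ⊕ InfPath G) := pathTop G
  rintro ⟨v, μ, hμ, huniq⟩
  have hpos : 0 < μ.edges.length := loopAt_pos_len hμ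
  have hstartμ : μ.start = v := hμ.2.1
  have hcyc : μ.rngF = μ.start := hμ.2.2.1.trans hstartμ.symm
  set μP := loopInf μ hpos hcyc with hμP
  have hμPstart : μP.start = v := (loopInf_start μ hpos hcyc).trans hstartμ
  set x : PathSp G := Sum.inr μP with hxdef
  set T : Set (PathSp G) := {t | TailEq G x t} with hT
  have hxninl : ∀ φ : FinPath G, x ≠ Sum.inl φ := fun φ h => Sum.inr_ne_inl h
  have hTinr : ∀ t ∈ T, ∃ τ : InfPath G, t = Sum.inr τ := by
    intro t ht
    rcases ht with ⟨a, b, c, u1, u2, he, _⟩ | ⟨a, b, wt, u1, u2, he, ht'⟩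
    · exact absurd he (hxninl _)
    · exact ⟨_, ht'⟩
  set F : Set (PathSp G) := closure T ∩ Xset G with hF
  have hxT : x ∈ T := by
    have h0 : μP.start = (FinPath.vp v : FinPath G).rngF := hμPstart
    exact Or.inr ⟨FinPath.vp v, FinPath.vp v, μP, h0, h0, rfl, rfl⟩
  have hxF : x ∈ F := ⟨subset_closure hxT, trivial⟩
  have hcl := hdense F Set.inter_subset_right
    ⟨closure T, isClosed_closure, rfl⟩
    (closure_tailClass_invariant x hxninl) hxF
  -- key: the only element of T starting at v is x itself
  have key : ∀ t ∈ T, startOf G t = v → t = x := by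
    intro t ht hst
    rcases ht with ⟨a, b, c, u1, u2, he, _⟩ | ⟨A, B, w, h1, h2, hxe, hte⟩
    · exact absurd he (hxninl _)
    have hμPA : μP = A.concatInf w h1 := Sum.inr.inj hxe
    set ζ := B.concatInf w h2 with hζdef
    have hζstart : ζ.start = v := by
      rw [hte] at hst; exact hst
    have hwseq : ∀ i, w.seq i = μP.seq (A.edges.length + i) := by
      intro i
      have h3 := concatInf_seq_ge A w h1 (i := A.edges.length + i) (by omega)
      rw [← hμPA] at h3
      rw [h3]
      congr 1
      omega
    have hsrc0 : ∀ m, m % μ.edges.length = 0 → G.src (μP.seq m) = v := by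
      intro m hm
      have h6 : G.src (μ.edges[m % μ.edges.length]'(Nat.mod_lt _ hpos)) = v := by
        simp only [hm]
        rw [valid_head μ.valid hpos, hstartμ]
      exact h6
    have hvis : ∀ N, ∃ M, N ≤ M ∧ G.src (ζ.seq M) = v := by
      intro N
      set i := (μ.edges.length - A.edges.length % μ.edges.length) +
        μ.edges.length * N with hi
      have hiN : N ≤ i := by
        have := Nat.le_mul_of_pos_left N hpos
        omega
      refine ⟨B.edges.length + i, by omega, ?_⟩
      have h7 : ζ.seq (B.edges.length + i) = w.seq i := by
        rw [hζdef, concatInf_seq_ge B w h2 (by omega)]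
        congr 1
        omega
      rw [h7, hwseq i]
      apply hsrc0
      have hfact : A.edges.length + i =
          μ.edges.length * (A.edges.length / μ.edges.length + 1 + N) := by
        have h8 : μ.edges.length * (A.edges.length / μ.edges.length) +
            A.edges.length % μ.edges.length = A.edges.length := Nat.div_add_mod _ _
        have h9 : A.edges.length % μ.edges.length < μ.edges.length :=
          Nat.mod_lt _ hpos
        rw [hi, Nat.mul_add, Nat.mul_add, Nat.mul_one]
        omega
      rw [hfact, Nat.mul_mod_right]
    have hζμ := inf_pattern μ hμ huniq ζ hζstart hvis
    rw [hte, hxdef]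
    congr 1
    apply ipext
    intro i
    rw [hζμ i]
    rfl
  -- x has an open neighbourhood not meeting the trivial-isotropy part of F
  have hxDμ : x ∈ Dset G μ := by
    rw [mem_Dset_iff]
    refine ⟨hμPstart.trans hstartμ.symm, fun i hi => ?_⟩
    show some (μP.seq i) = μ.edges[i]?
    rw [loopInf_seq, List.getElem?_eq_getElem hi]
    simp only [Nat.mod_eq_of_lt hi]
  obtain ⟨y, hyDμ, hyF, hyTriv⟩ :=
    mem_closure_iff.1 hcl (Dset G μ) (isOpen_Dset μ) hxDμ
  -- y starts at v
  have hystart : startOf G y = v := by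
    rw [(mem_Dset_iff.1 hyDμ).1, hstartμ]
  cases y with
  | inl φ =>
    -- step 1 : φ is a prefix of μP
    have hφcl : (Sum.inl φ : PathSp G) ∈ closure T := hyF.1
    obtain ⟨t₁, ht₁D, ht₁T⟩ := mem_closure_iff.1 hφcl (Dset G φ) (isOpen_Dset φ)
      (mem_Dset_self φ)
    obtain ⟨τ₁, hτ₁⟩ := hTinr t₁ ht₁T
    have ht₁start : startOf G t₁ = v := by
      rw [(mem_Dset_iff.1 ht₁D).1]
      exact hystart
    have ht₁x : t₁ = x := key t₁ ht₁T ht₁start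
    have hφpref : (Sum.inr μP : PathSp G) ∈ Dset G φ := by
      rw [← hxdef, ← ht₁x]; exact ht₁D
    -- step 2 : extend φ by one more edge of μP and contradict
    set e₀ := μP.seq φ.edges.length with he₀
    have hsrce₀ : G.src e₀ = φ.rngF := src_seq_len_of_pref hφpref
    set φe := φ.concat (FinPath.ep e₀) hsrce₀ with hφe
    have hφelen : φe.edges.length = φ.edges.length + 1 := by
      rw [hφe]
      show (φ.edges ++ [e₀]).length = _
      simp
    have hU' : IsOpen (Dset G φ ∩ (Dset G φe)ᶜ) :=
      (isOpen_Dset φ).inter (isOpen_Dset_compl φe)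
    have hyU' : (Sum.inl φ : PathSp G) ∈ Dset G φ ∩ (Dset G φe)ᶜ := by
      refine ⟨mem_Dset_self φ, ?_⟩
      exact inl_not_mem_Dset_of_long (by omega)
    obtain ⟨t₂, ht₂U, ht₂T⟩ := mem_closure_iff.1 hφcl _ hU' hyU'
    obtain ⟨τ₂, hτ₂⟩ := hTinr t₂ ht₂T
    have ht₂start : startOf G t₂ = v := by
      rw [(mem_Dset_iff.1 ht₂U.1).1]
      exact hystart
    have ht₂x : t₂ = x := key t₂ ht₂T ht₂start
    apply ht₂U.2
    rw [ht₂x, hxdef]; refine mem_Dset_iff.2 ?_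
    have hφμ := mem_Dset_iff.1 hφpref
    constructor
    · exact hφμ.1
    · intro i hi
      rw [hφelen] at hi
      show some (μP.seq i) = φe.edges[i]?
      show some (μP.seq i) = (φ.edges ++ [e₀])[i]?
      rcases Nat.lt_or_ge i φ.edges.length with hiφ | hiφ
      · rw [List.getElem?_append_left hiφ]
        exact hφμ.2 i hiφ
      · have hieq : i = φ.edges.length := by omega
        rw [List.getElem?_append_right hiφ, hieq]
        simp [he₀]
  | inr ζy =>
    -- ζy = μP
    have hζycl : (Sum.inr ζy : PathSp G) ∈ closure T := hyF.1
    have hζyμ : ζy = μP := by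
      apply ipext
      intro j
      obtain ⟨t₃, ht₃D, ht₃T⟩ := mem_closure_iff.1 hζycl (Dset G (takeP (j+1) ζy))
        (isOpen_Dset _) (inr_mem_Dset_takeP (j+1) ζy)
      obtain ⟨τ₃, hτ₃⟩ := hTinr t₃ ht₃T
      have ht₃start : startOf G t₃ = v := by
        rw [(mem_Dset_iff.1 ht₃D).1]
        exact hystart
      have ht₃x : t₃ = x := key t₃ ht₃T ht₃start
      rw [ht₃x] at ht₃D
      have hpref := mem_Dset_iff.1 ht₃D
      have hj : j < (takeP (j+1) ζy).edges.length := by simp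
      have h5 := hpref.2 j hj
      simp only [nthEdge] at h5
      rw [List.getElem?_eq_getElem hj] at h5
      have h6 := Option.some.inj h5
      rw [takeP_getElem (j+1) ζy j (by omega)] at h6
      exact h6.symm
    -- y = x has nontrivial isotropy : contradiction
    have h1 : μP.start = (FinPath.vp v : FinPath G).rngF := hμPstart
    have h2 : μP.start = μ.rngF := (loopInf_start μ hpos hcyc).trans hcyc.symm
    have hμcat : μP = μ.concatInf μP h2 := by
      apply inr_eq_concatInf
      · intro i hi
        rw [loopInf_seq]
        congr 1
        exact Nat.mod_eq_of_lt hi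
      · intro i
        rw [loopInf_seq, loopInf_seq]
        congr 1
        conv_lhs => rw [show μ.edges.length + i = i + μ.edges.length from by omega]
        rw [Nat.add_mod_right]
    have := hyTriv (FinPath.vp v) μ
      (Or.inr ⟨μP, h1, h2, by rw [hζyμ]; rfl, by rw [hζyμ]; exact congrArg _ hμcat⟩)
    have hlen : (FinPath.vp v : FinPath G).len = 0 := rfl
    have hlen2 : μ.len = μ.edges.length := rfl
    omega

end Reverse


section Blocks

variable {G}

variable (B : ℕ → FinPath G)

/-- Offsets of the blocks. -/
def Soff : ℕ → ℕ
  | 0 => 0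
  | j + 1 => Soff j + (B j).edges.length

theorem Soff_strictMono (hpos : ∀ j, 0 < (B j).edges.length) :
    StrictMono (Soff B) := by
  apply strictMono_nat_of_lt_succ
  intro j
  show Soff B j < Soff B j + (B j).edges.length
  have := hpos j
  omega

theorem le_Soff (hpos : ∀ j, 0 < (B j).edges.length) (j : ℕ) : j ≤ Soff B j := by
  induction j with
  | zero => exact Nat.zero_le _
  | succ m ih =>
    show m + 1 ≤ Soff B m + (B m).edges.length
    have := hpos m
    omega

theorem Jb_ex (hpos : ∀ j, 0 < (B j).edges.length) (m : ℕ) :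
    ∃ j, m < Soff B (j + 1) :=
  ⟨m, by have := le_Soff B hpos (m + 1); omega⟩

/-- Index of the block containing position `m`. -/
def Jb (hpos : ∀ j, 0 < (B j).edges.length) (m : ℕ) : ℕ :=
  Nat.find (Jb_ex B hpos m)

theorem Jb_spec (hpos : ∀ j, 0 < (B j).edges.length) (m : ℕ) :
    Soff B (Jb B hpos m) ≤ m ∧ m < Soff B (Jb B hpos m + 1) := by
  have hfind : m < Soff B (Nat.find (Jb_ex B hpos m) + 1) := Nat.find_spec (Jb_ex B hpos m)
  refine ⟨?_, hfind⟩
  rcases hn : Jb B hpos m with _ | k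
  · show (0 : ℕ) ≤ m; omega
  · have hlt : k < Nat.find (Jb_ex B hpos m) := by
      show k < Jb B hpos m
      omega
    have hmin := Nat.find_min (Jb_ex B hpos m) hlt
    push_neg at hmin
    exact hn ▸ hmin

theorem Jb_eq (hpos : ∀ j, 0 < (B j).edges.length) (j r : ℕ)
    (hr : r < (B j).edges.length) : Jb B hpos (Soff B j + r) = j := by
  have hspec := Jb_spec B hpos (Soff B j + r)
  set j' := Jb B hpos (Soff B j + r)
  by_contra hne
  rcases Nat.lt_or_ge j' j with h | h
  · have : Soff B (j' + 1) ≤ Soff B j := (Soff_strictMono B hpos).le_iff_le.2 (by omega)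
    omega
  · have hj : j < j' := by omega
    have : Soff B (j + 1) ≤ Soff B j' := (Soff_strictMono B hpos).le_iff_le.2 (by omega)
    have : Soff B j + (B j).edges.length ≤ Soff B j' := this
    omega

/-- The edge sequence of the infinite concatenation of the blocks. -/
noncomputable def bseq (hpos : ∀ j, 0 < (B j).edges.length) (m : ℕ) : G.Ed :=
  (B (Jb B hpos m)).edges[m - Soff B (Jb B hpos m)]'(by
    have hspec := Jb_spec B hpos m
    have : Soff B (Jb B hpos m + 1) = Soff B (Jb B hpos m) +
      (B (Jb B hpos m)).edges.length := rfl
    omega)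

theorem bseq_eq (hpos : ∀ j, 0 < (B j).edges.length) (j r : ℕ)
    (hr : r < (B j).edges.length) :
    bseq B hpos (Soff B j + r) = (B j).edges[r]'hr := by
  rw [bseq]
  have h1 := Jb_eq B hpos j r hr
  simp only [h1]
  congr 1
  omega

theorem bseq_decomp (hpos : ∀ j, 0 < (B j).edges.length) (m : ℕ) :
    ∃ j r, r < (B j).edges.length ∧ m = Soff B j + r := by
  have hspec := Jb_spec B hpos m
  refine ⟨Jb B hpos m, m - Soff B (Jb B hpos m), ?_, by omega⟩
  have : Soff B (Jb B hpos m + 1) = Soff B (Jb B hpos m) +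
    (B (Jb B hpos m)).edges.length := rfl
  omega

/-- The infinite concatenation of blocks (loops based at `u`). -/
noncomputable def blockInf (u : G.V) (hpos : ∀ j, 0 < (B j).edges.length)
    (hstart : ∀ j, (B j).start = u) (hrng : ∀ j, (B j).rngF = u) : InfPath G where
  seq := bseq B hpos
  valid := by
    intro m
    obtain ⟨j, r, hr, hm⟩ := bseq_decomp B hpos m
    rcases Nat.lt_or_ge (r + 1) ((B j).edges.length) with h | h
    · have h1 : bseq B hpos (m + 1) = (B j).edges[r + 1]'h := by
        rw [hm, show Soff B j + r + 1 = Soff B j + (r + 1) from rfl]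
        exact bseq_eq B hpos j (r + 1) h
      have h2 : bseq B hpos m = (B j).edges[r]'hr := by
        rw [hm]; exact bseq_eq B hpos j r hr
      rw [h1, h2]
      exact valid_chain (B j).valid r h
    · have hre : r + 1 = (B j).edges.length := by omega
      have h1 : bseq B hpos (m + 1) = (B (j + 1)).edges[0]'(hpos (j + 1)) := by
        have : m + 1 = Soff B (j + 1) + 0 := by
          show m + 1 = Soff B j + (B j).edges.length + 0
          omega
        rw [this]
        exact bseq_eq B hpos (j + 1) 0 (hpos (j + 1))
      have h2 : bseq B hpos m = (B j).edges[r]'hr := by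
        rw [hm]; exact bseq_eq B hpos j r hr
      rw [h1, h2]
      rw [valid_head (B (j + 1)).valid (hpos (j + 1)), hstart (j + 1)]
      have h3 : rngTo G (B j).start ((B j).edges.take (r + 1)) =
          G.rng ((B j).edges[r]'hr) := rngTo_take_succ r hr
      rw [hre, List.take_length] at h3
      rw [← h3, ← hrng j]
      rfl

theorem blockInf_seq (u : G.V) (hpos : ∀ j, 0 < (B j).edges.length)
    (hstart : ∀ j, (B j).start = u) (hrng : ∀ j, (B j).rngF = u) (m : ℕ) :
    (blockInf B u hpos hstart hrng).seq m = bseq B hpos m := rfl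

theorem blockInf_start (u : G.V) (hpos : ∀ j, 0 < (B j).edges.length)
    (hstart : ∀ j, (B j).start = u) (hrng : ∀ j, (B j).rngF = u) :
    (blockInf B u hpos hstart hrng).start = u := by
  show G.src (bseq B hpos 0) = u
  have h0 : bseq B hpos 0 = (B 0).edges[0]'(hpos 0) := bseq_eq B hpos 0 0 (hpos 0)
  rw [h0, valid_head (B 0).valid (hpos 0), hstart 0]

/-- The concatenation of the first `m` blocks, as a finite path. -/
noncomputable def BlkCat (u : G.V) (hstart : ∀ j, (B j).start = u)
    (hrng : ∀ j, (B j).rngF = u) :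
    (m : ℕ) → {ρ : FinPath G // ρ.start = u ∧ ρ.rngF = u}
  | 0 => ⟨FinPath.vp u, rfl, rfl⟩
  | m + 1 =>
    ⟨(BlkCat u hstart hrng m).1.concat (B m)
        ((hstart m).trans (BlkCat u hstart hrng m).2.2.symm),
      (BlkCat u hstart hrng m).2.1,
      by rw [FinPath.rngF_concat]; exact hrng m⟩

theorem BlkCat_len (u : G.V) (hstart : ∀ j, (B j).start = u)
    (hrng : ∀ j, (B j).rngF = u) (m : ℕ) :
    (BlkCat B u hstart hrng m).1.edges.length = Soff B m := by
  induction m with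
  | zero => rfl
  | succ k ih =>
    show ((BlkCat B u hstart hrng k).1.edges ++ (B k).edges).length = _
    rw [List.length_append, ih]
    rfl

theorem BlkCat_getElem (u : G.V) (hpos : ∀ j, 0 < (B j).edges.length)
    (hstart : ∀ j, (B j).start = u) (hrng : ∀ j, (B j).rngF = u) (m i : ℕ)
    (hi : i < Soff B m) :
    (BlkCat B u hstart hrng m).1.edges[i]? = some (bseq B hpos i) := by
  induction m with
  | zero => exact absurd hi (by simp [Soff])
  | succ k ih =>
    show ((BlkCat B u hstart hrng k).1.edges ++ (B k).edges)[i]? = _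
    rcases Nat.lt_or_ge i (Soff B k) with h | h
    · rw [List.getElem?_append_left (by rw [BlkCat_len]; exact h)]
      exact ih h
    · rw [List.getElem?_append_right (by rw [BlkCat_len]; exact h)]
      rw [BlkCat_len]
      have hik : i - Soff B k < (B k).edges.length := by
        have : Soff B (k+1) = Soff B k + (B k).edges.length := rfl
        omega
      rw [List.getElem?_eq_getElem hik]
      congr 1
      have : i = Soff B k + (i - Soff B k) := by omega
      conv_rhs => rw [this]
      rw [bseq_eq B hpos k (i - Soff B k) hik]

end Blocks

section SqSeq

/-- An aperiodic boolean sequence: the indicator of the squares. -/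
def sqSeq (n : ℕ) : Bool := decide (Nat.sqrt n * Nat.sqrt n = n)

theorem sqSeq_aperiodic : ∀ D, 0 < D → ∀ N, ∃ j, N ≤ j ∧ sqSeq j ≠ sqSeq (j + D) := by
  intro D hD N
  set K := max N D + 1 with hK
  have hKN : N ≤ K := by omega
  have hKD : D ≤ K := by omega
  have hKpos : 0 < K := by omega
  refine ⟨K * K, Nat.le_trans hKN (Nat.le_mul_of_pos_left K hKpos), ?_⟩
  have h1 : sqSeq (K * K) = true := by
    rw [sqSeq, decide_eq_true_eq, Nat.sqrt_eq]
  have h2 : sqSeq (K * K + D) = false := by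
    rw [sqSeq, decide_eq_false_iff_not]
    have hsq : Nat.sqrt (K * K + D) = K := by
      apply le_antisymm
      · have h3 : K * K + D < (K + 1) * (K + 1) := by
          have : (K + 1) * (K + 1) = K * K + 2 * K + 1 := by ring
          omega
        have h3' : K * K + D < (K + 1) ^ 2 := by
          have : (K + 1) ^ 2 = (K + 1) * (K + 1) := by ring
          omega
        have := Nat.sqrt_lt'.2 h3'
        omega
      · exact Nat.le_sqrt.2 (by omega)
    rw [hsq]
    omega
  rw [h1, h2]
  simp

end SqSeq


section Forward

variable {G}

theorem trivIso_inl (φ : FinPath G) : TrivIso G (Sum.inl φ) := by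
  intro α β h
  rcases h with ⟨γ, h1, h2, e1, e2⟩ | ⟨w, h1, h2, e1, e2⟩
  · have e3 : α.concat γ h1 = β.concat γ h2 := Sum.inl.inj (e1.symm.trans e2)
    have e4 : α.edges ++ γ.edges = β.edges ++ γ.edges := congrArg FinPath.edges e3
    have e5 := congrArg List.length e4
    simp only [List.length_append] at e5
    show α.edges.length = β.edges.length
    omega
  · exact absurd e1 (fun h => nomatch h)

theorem condK_implies_dense (hK : CondK G) :
    ∀ F : Set (PathSp G), F ⊆ Xset G →
      (∃ C : Set (PathSp G), @IsClosed (PathSp G) (pathTop G) C ∧ F = C ∩ Xset G) →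
      InvariantS G F →
      F ⊆ @closure (PathSp G) (pathTop G) {x | x ∈ F ∧ TrivIso G x} := by
  letI : TopologicalSpace (PathSp G) := pathTop G
  letI : TopologicalSpace (FinPath G ⊕ InfPath G) := pathTop G
  intro F hFX hFC hFinv x hxF
  by_cases hTx : TrivIso G x
  · exact subset_closure ⟨hxF, hTx⟩
  rw [TrivIso] at hTx
  push_neg at hTx
  obtain ⟨α, β, hcl, hlen⟩ := hTx
  rcases hcl with ⟨γ, k1, k2, e1, e2⟩ | ⟨w, k1, k2, e1, e2⟩
  · exfalso
    apply hlen
    have e3 : α.concat γ k1 = β.concat γ k2 := Sum.inl.inj (e1.symm.trans e2)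
    have e4 : α.edges ++ γ.edges = β.edges ++ γ.edges := congrArg FinPath.edges e3
    have e5 := congrArg List.length e4
    simp only [List.length_append] at e5
    show α.edges.length = β.edges.length
    omega
  -- x is infinite and eventually periodic
  set Z := α.concatInf w k1 with hZ
  have hZ2 : Z = β.concatInf w k2 := Sum.inr.inj (e1.symm.trans e2)
  have hxZ : x = Sum.inr Z := e1
  have hlen' : α.edges.length ≠ β.edges.length := hlen
  have hs1 : ∀ i, Z.seq (α.edges.length + i) = w.seq i := by
    intro i
    rw [hZ, concatInf_seq_ge α w k1 (by omega)]
    congr 1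
    omega
  have hs2 : ∀ i, Z.seq (β.edges.length + i) = w.seq i := by
    intro i
    rw [hZ2, concatInf_seq_ge β w k2 (by omega)]
    congr 1
    omega
  obtain ⟨q, hqpos, hqper⟩ : ∃ q, 0 < q ∧ ∀ i, w.seq (i + q) = w.seq i := by
    rcases Nat.lt_or_ge α.edges.length β.edges.length with h | h
    · refine ⟨β.edges.length - α.edges.length, by omega, fun i => ?_⟩
      have h5 : Z.seq (β.edges.length + i) =
          w.seq (i + (β.edges.length - α.edges.length)) := by
        rw [← hs1 (i + (β.edges.length - α.edges.length))]
        congr 1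
        omega
      rw [hs2 i] at h5
      exact h5.symm
    · have h' : β.edges.length < α.edges.length := by omega
      refine ⟨α.edges.length - β.edges.length, by omega, fun i => ?_⟩
      have h5 : Z.seq (α.edges.length + i) =
          w.seq (i + (α.edges.length - β.edges.length)) := by
        rw [← hs2 (i + (α.edges.length - β.edges.length))]
        congr 1
        omega
      rw [hs1 i] at h5
      exact h5.symm
  set u := w.start with hu
  have hwq : ∀ k, w.seq (k * q) = w.seq 0 := by
    intro k
    induction k with
    | zero => rw [Nat.zero_mul]
    | succ k ih =>
      rw [show (k + 1) * q = k * q + q from by ring, hqper (k * q), ih]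
  have hsrcq : ∀ k, G.src (w.seq (k * q)) = u := by
    intro k
    rw [hwq k]
    rfl
  -- a loop at u
  have hσvalid : Valid G u ((takeP q w).edges) := (takeP q w).valid
  have hσrng : rngTo G u ((takeP q w).edges) = u := by
    show (takeP q w).rngF = u
    rw [takeP_rngF]
    have : w.seq q = w.seq (1 * q) := by rw [Nat.one_mul]
    rw [this]
    exact hsrcq 1
  have hσne : (takeP q w).edges ≠ [] := by
    intro hc
    have := congrArg List.length hc
    simp at this
    omega
  obtain ⟨kf, -, -, -, hlp0loop⟩ := first_return hσvalid hσrng hσne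
  set lp0 : FinPath G := ⟨u, (takeP q w).edges.take kf, valid_take kf hσvalid⟩ with hlp0def
  obtain ⟨lp1, hlp1, hlpne⟩ : ∃ lp1, LoopAt G u lp1 ∧ lp1 ≠ lp0 := by
    by_contra hc
    push_neg at hc
    exact hK ⟨u, lp0, hlp0loop, fun y hy => hc y hy⟩
  -- the blocks
  set B : ℕ → FinPath G := fun j => cond (sqSeq j) lp1 lp0 with hB
  have hBloop : ∀ j, LoopAt G u (B j) := by
    intro j
    show LoopAt G u (cond (sqSeq j) lp1 lp0)
    cases sqSeq j
    · exact hlp0loop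
    · exact hlp1
  have hBpos : ∀ j, 0 < (B j).edges.length := fun j => loopAt_pos_len (hBloop j)
  have hBstart : ∀ j, (B j).start = u := fun j => (hBloop j).2.1
  have hBrng : ∀ j, (B j).rngF = u := fun j => (hBloop j).2.2.1
  have hBinj : ∀ j j', (B j).edges = (B j').edges → sqSeq j = sqSeq j' := by
    intro j j' he
    by_contra hne2
    have hlpeq : lp1 = lp0 := by
      apply fpext ((hlp1.2.1).trans (hlp0loop.2.1).symm)
      show lp1.edges = lp0.edges
      revert he
      show (cond (sqSeq j) lp1 lp0).edges = (cond (sqSeq j') lp1 lp0).edges → _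
      cases hj : sqSeq j <;> cases hj' : sqSeq j' <;> intro he
      · exact absurd (hj.trans hj'.symm) hne2
      · exact he.symm
      · exact he
      · exact absurd (hj.trans hj'.symm) hne2
    exact hlpne hlpeq
  set W := blockInf B u hBpos hBstart hBrng with hW
  -- the dense point construction, per neighbourhood
  rw [mem_closure_iff]
  intro U hU hxU
  rw [hxZ] at hxU
  obtain ⟨n, hcyl⟩ := cyl_nbhd hU hxU
  set L0 := α.edges.length + n * q with hL0
  have hL0n : n ≤ L0 := by
    have := Nat.le_mul_of_pos_right n hqpos
    omega
  set A := takeP L0 Z with hA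
  have hAlen : A.edges.length = L0 := by simp [hA]
  have hArng : A.rngF = u := by
    rw [hA, takeP_rngF]
    have h5 : Z.seq L0 = w.seq (n * q) := by
      rw [hZ, concatInf_seq_ge α w k1 (by omega)]
      congr 1
      omega
    rw [h5]
    exact hsrcq n
  have hWstart : W.start = A.rngF :=
    (blockInf_start B u hBpos hBstart hBrng).trans hArng.symm
  set Y := A.concatInf W hWstart with hY
  have hYseq_lt : ∀ i, i < L0 → Y.seq i = Z.seq i := by
    intro i hi
    rw [hY, concatInf_seq_lt A W hWstart (by omega)]
    exact takeP_getElem L0 Z i hi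
  have hYseq_ge : ∀ i, Y.seq (L0 + i) = bseq B hBpos i := by
    intro i
    rw [hY, concatInf_seq_ge A W hWstart (by omega)]
    show W.seq (L0 + i - A.edges.length) = bseq B hBpos i
    rw [hW, blockInf_seq]
    congr 1
    omega
  set y : PathSp G := Sum.inr Y with hydef
  -- y ∈ U
  have hyU : y ∈ U := by
    apply hcyl
    constructor
    · show Y.start = Z.start
      rw [hY, concatInf_start]
      rfl
    · intro i hi
      show some (Y.seq i) = some (Z.seq i)
      rw [hYseq_lt i (by omega)]
  -- y ∈ F
  obtain ⟨C, hCcl, hFeq⟩ := hFC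
  have hyF : y ∈ F := by
    rw [hFeq]
    refine ⟨?_, trivial⟩
    have hFsubC : F ⊆ C := by rw [hFeq]; exact Set.inter_subset_left
    have hycl : y ∈ closure F := by
      rw [mem_closure_iff]
      intro V hV hyV
      rw [hydef] at hyV
      obtain ⟨n', hcyl'⟩ := cyl_nbhd hV hyV
      have hΘs : (BlkCat B u hBstart hBrng n').1.start = A.rngF :=
        ((BlkCat B u hBstart hBrng n').2.1).trans hArng.symm
      set Θ := A.concat (BlkCat B u hBstart hBrng n').1 hΘs with hΘ
      have hym : w.start = Θ.rngF := by
        rw [hΘ, FinPath.rngF_concat]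
        exact ((BlkCat B u hBstart hBrng n').2.2).symm
      have hΘlen : Θ.edges.length = L0 + Soff B n' := by
        show (A.edges ++ (BlkCat B u hBstart hBrng n').1.edges).length = _
        rw [List.length_append, hAlen, BlkCat_len]
      refine ⟨Sum.inr (Θ.concatInf w hym), hcyl' _ ⟨?_, ?_⟩, ?_⟩
      · show (Θ.concatInf w hym).start = Y.start
        rw [concatInf_start, hY, concatInf_start]
        rfl
      · intro i hi
        show some ((Θ.concatInf w hym).seq i) = some (Y.seq i)
        congr 1
        have hin' : i < Θ.edges.length := by
          have := le_Soff B hBpos n'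
          omega
        rw [concatInf_seq_lt Θ w hym hin']
        rcases Nat.lt_or_ge i L0 with hiL0 | hiL0
        · have h6 : Θ.edges[i]'hin' = A.edges[i]'(by omega) := by
            show (A.edges ++ (BlkCat B u hBstart hBrng n').1.edges)[i]'_ = _
            exact List.getElem_append_left (by omega)
          rw [h6, hYseq_lt i hiL0]
          exact takeP_getElem L0 Z i hiL0
        · have hiS : i - L0 < Soff B n' := by omega
          have h6 : Θ.edges[i]'hin' =
              (BlkCat B u hBstart hBrng n').1.edges[i - L0]'(by
                rw [BlkCat_len]; omega) := by
            show (A.edges ++ (BlkCat B u hBstart hBrng n').1.edges)[i]'_ = _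
            refine (List.getElem_append_right (h₂ := hin') (by omega : A.edges.length ≤ i)).trans ?_
            congr 1
            omega
          rw [h6]
          have h7 := BlkCat_getElem B u hBpos hBstart hBrng n' (i - L0) hiS
          rw [List.getElem?_eq_getElem (by rw [BlkCat_len]; omega)] at h7
          have h8 := Option.some.inj h7
          rw [h8, ← hYseq_ge (i - L0)]
          congr 1
          omega
      · apply hFinv x hxF
        exact Or.inr ⟨α, Θ, w, k1, hym, e1, rfl⟩
    have := closure_minimal hFsubC hCcl
    exact this hycl
  -- y has trivial isotropy
  have haper : ∀ q' g, 0 < q' → (∀ m, g ≤ m → Y.seq (m + q') = Y.seq m) → False := by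
    intro q' g hq' hper
    have hP : ∀ m, (∃ j, m = Soff B j) ↔ G.src (Y.seq (L0 + m)) = u := by
      intro m
      constructor
      · rintro ⟨j, rfl⟩
        rw [hYseq_ge (Soff B j)]
        have h5 : bseq B hBpos (Soff B j) = (B j).edges[0]'(hBpos j) :=
          bseq_eq B hBpos j 0 (hBpos j)
        rw [h5, valid_head (B j).valid (hBpos j)]
        exact hBstart j
      · intro hsrc
        obtain ⟨j, r, hr, hm⟩ := bseq_decomp B hBpos m
        refine ⟨j, ?_⟩
        rcases Nat.eq_zero_or_pos r with h0 | h0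
        · omega
        · exfalso
          rw [hYseq_ge m, hm, bseq_eq B hBpos j r hr] at hsrc
          have h5 := valid_chain (B j).valid (r - 1) (by omega)
          simp only [show r - 1 + 1 = r from by omega] at h5
          rw [h5] at hsrc
          exact (hBloop j).2.2.2 (r - 1) _ (by omega)
            (List.getElem?_eq_getElem (by omega)) hsrc
    have hshift : ∀ m, g ≤ m → (G.src (Y.seq m) = u ↔ G.src (Y.seq (m + q')) = u) := by
      intro m hm
      rw [hper m hm]
    set j₀ := g with hj₀
    have hbig : ∀ j, j₀ ≤ j → g ≤ L0 + Soff B j := by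
      intro j hj
      have := le_Soff B hBpos j
      omega
    have claimA : ∀ i, ∃ j', Soff B (j₀ + i) + q' = Soff B j' := by
      intro i
      have h1 : G.src (Y.seq (L0 + Soff B (j₀ + i))) = u := (hP _).1 ⟨j₀ + i, rfl⟩
      have h2 : G.src (Y.seq (L0 + Soff B (j₀ + i) + q')) = u :=
        (hshift _ (hbig _ (by omega))).1 h1
      have h3 : G.src (Y.seq (L0 + (Soff B (j₀ + i) + q'))) = u := by
        rw [show L0 + (Soff B (j₀ + i) + q') = L0 + Soff B (j₀ + i) + q' from by omega]
        exact h2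
      obtain ⟨j', hj'⟩ := (hP _).2 h3
      exact ⟨j', hj'⟩
    choose φ hφ using claimA
    have hSmono := Soff_strictMono B hBpos
    have hgap : ∀ j j', Soff B j < Soff B j' → Soff B j' < Soff B (j + 1) → False := by
      intro j j' h1 h2
      have g1 := hSmono.lt_iff_lt.1 h1
      have g2 := hSmono.lt_iff_lt.1 h2
      omega
    have hPshifted : ∀ m, g ≤ L0 + m →
        ((∃ j, m = Soff B j) ↔ ∃ j, m + q' = Soff B j) := by
      intro m hm
      rw [hP m, hP (m + q'),
        show L0 + (m + q') = L0 + m + q' from by omega]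
      exact hshift (L0 + m) hm
    have claimLen : ∀ i, (B (φ i)).edges.length = (B (j₀ + i)).edges.length := by
      intro i
      have hφi := hφ i
      have hS1 : Soff B (j₀ + i + 1) = Soff B (j₀ + i) + (B (j₀ + i)).edges.length := rfl
      have hS2 : Soff B (φ i + 1) = Soff B (φ i) + (B (φ i)).edges.length := rfl
      have hposj := hBpos (j₀ + i)
      have hposφ := hBpos (φ i)
      rcases Nat.lt_trichotomy ((B (φ i)).edges.length) ((B (j₀ + i)).edges.length)
        with h | h | h
      · exfalso
        have h1 : ∃ j', (Soff B (j₀ + i) + (B (φ i)).edges.length) + q' = Soff B j' :=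
          ⟨φ i + 1, by omega⟩
        have h2 := (hPshifted (Soff B (j₀ + i) + (B (φ i)).edges.length)
          (by have := hbig (j₀ + i) (by omega); omega)).2 h1
        obtain ⟨j₃, hj₃⟩ := h2
        exact hgap (j₀ + i) j₃ (by omega) (by omega)
      · exact h
      · exfalso
        have h1 : ∃ j', Soff B (j₀ + i + 1) + q' = Soff B j' := by
          have := (hPshifted (Soff B (j₀ + i + 1))
            (by have := hbig (j₀ + i + 1) (by omega); omega)).1 ⟨j₀ + i + 1, rfl⟩
          obtain ⟨j₂, hj₂⟩ := this
          exact ⟨j₂, hj₂⟩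
        obtain ⟨j₂, hj₂⟩ := h1
        exact hgap (φ i) j₂ (by omega) (by omega)
    have claimEdge : ∀ i r, (hr : r < (B (j₀ + i)).edges.length) →
        (B (φ i)).edges[r]'(by rw [claimLen i]; exact hr) = (B (j₀ + i)).edges[r]'hr := by
      intro i r hr
      have hφi := hφ i
      have e5 : Y.seq (L0 + (Soff B (φ i) + r)) = Y.seq (L0 + (Soff B (j₀ + i) + r)) := by
        rw [show L0 + (Soff B (φ i) + r) = (L0 + (Soff B (j₀ + i) + r)) + q' from by omega]
        exact hper _ (by have := hbig (j₀ + i) (by omega); omega)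
      rw [hYseq_ge, hYseq_ge] at e5
      rw [bseq_eq B hBpos (φ i) r (by rw [claimLen i]; exact hr),
        bseq_eq B hBpos (j₀ + i) r hr] at e5
      exact e5
    have claimSq : ∀ i, sqSeq (φ i) = sqSeq (j₀ + i) := by
      intro i
      apply hBinj
      apply List.ext_getElem (claimLen i)
      intro r h1 h2
      exact claimEdge i r h2
    have claimSucc : ∀ i, φ (i + 1) = φ i + 1 := by
      intro i
      apply hSmono.injective
      have e1 := hφ (i + 1)
      have e2 := hφ i
      have e3 : Soff B (j₀ + (i + 1)) = Soff B (j₀ + i) + (B (j₀ + i)).edges.length := by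
        rw [show j₀ + (i + 1) = (j₀ + i) + 1 from by omega]
        rfl
      have e4 : Soff B (φ i + 1) = Soff B (φ i) + (B (φ i)).edges.length := rfl
      have e6 := claimLen i
      omega
    have claimLin : ∀ i, φ i = φ 0 + i := by
      intro i
      induction i with
      | zero => rfl
      | succ k ih => rw [claimSucc k, ih]; omega
    have hD : j₀ < φ 0 := by
      have h1 := hφ 0
      rw [show j₀ + 0 = j₀ from by omega] at h1
      have h2 : Soff B j₀ < Soff B (φ 0) := by omega
      exact hSmono.lt_iff_lt.1 h2
    obtain ⟨j, hjge, hjne⟩ := sqSeq_aperiodic (φ 0 - j₀) (by omega) j₀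
    apply hjne
    have h1 := claimSq (j - j₀)
    rw [claimLin (j - j₀)] at h1
    rw [show j₀ + (j - j₀) = j from by omega] at h1
    rw [show φ 0 + (j - j₀) = j + (φ 0 - j₀) from by omega] at h1
    exact h1.symm
  have hhalf : ∀ (γ δ : FinPath G) (w₁ : InfPath G) (m1 : w₁.start = γ.rngF)
      (m2 : w₁.start = δ.rngF), Y = γ.concatInf w₁ m1 → Y = δ.concatInf w₁ m2 →
      γ.edges.length < δ.edges.length → False := by
    intro γ δ w₁ m1 m2 hY1 hY2 hlt
    have hg1 : ∀ i, Y.seq (γ.edges.length + i) = w₁.seq i := by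
      intro i
      rw [hY1, concatInf_seq_ge γ w₁ m1 (by omega)]
      congr 1
      omega
    have hg2 : ∀ i, Y.seq (δ.edges.length + i) = w₁.seq i := by
      intro i
      rw [hY2, concatInf_seq_ge δ w₁ m2 (by omega)]
      congr 1
      omega
    apply haper (δ.edges.length - γ.edges.length) γ.edges.length (by omega)
    intro m hm
    have e1 : Y.seq (m + (δ.edges.length - γ.edges.length)) =
        w₁.seq (m - γ.edges.length) := by
      rw [show m + (δ.edges.length - γ.edges.length) =
        δ.edges.length + (m - γ.edges.length) from by omega]
      exact hg2 _
    have e2 : Y.seq m = w₁.seq (m - γ.edges.length) := by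
      have h9 := hg1 (m - γ.edges.length)
      rw [show γ.edges.length + (m - γ.edges.length) = m from by omega] at h9
      exact h9
    rw [e1, e2]
  have hyTriv : TrivIso G y := by
    intro γ δ hcl2
    rcases hcl2 with ⟨_, _, _, e3, _⟩ | ⟨w₁, m1, m2, e3, e4⟩
    · exact absurd e3 (fun h => nomatch h)
    have hY1 : Y = γ.concatInf w₁ m1 := Sum.inr.inj e3
    have hY2 : Y = δ.concatInf w₁ m2 := Sum.inr.inj e4
    show γ.edges.length = δ.edges.length
    rcases Nat.lt_trichotomy γ.edges.length δ.edges.length with h | h | h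
    · exact (hhalf γ δ w₁ m1 m2 hY1 hY2 h).elim
    · exact h
    · exact (hhalf δ γ w₁ m2 m1 hY2 hY1 h).elim
  exact ⟨y, hyU, hyF, hyTriv⟩

end Forward

/-- `E` satisfies condition (K) (no vertex has exactly one loop based
at it) iff for every subset `F` of `X` that is closed in the subspace topology of `X`
and invariant under tail equivalence, the set of points of `F` with trivial isotropy is
dense in `F`. -/
theorem condK_iff_essentially_principal (G : Graph) [Countable G.V] [Countable G.Ed]
    (hns : ∀ v : G.V, ∃ e : G.Ed, G.src e = v) :
    CondK G ↔
      ∀ F : Set (PathSp G), F ⊆ Xset G →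
        (∃ C : Set (PathSp G), @IsClosed (PathSp G) (pathTop G) C ∧ F = C ∩ Xset G) →
        InvariantS G F →
        F ⊆ @closure (PathSp G) (pathTop G) {x | x ∈ F ∧ TrivIso G x} :=
  ⟨fun hK => condK_implies_dense hK, fun h => dense_implies_condK h⟩

end GraphCstar
end
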